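/- arXiv:2602.08739 — 5 statements merged into one kernel-verified Lean document; each statement's English description precedes it below -/
import Mathlib

section
/- Let β > 0 and let m, N be integers with 1 ≤ m < N. Then for all (x_1,…,x_m) ∈ ℝ^m, ρ_{N,β}^{(m)}(x_1,…,x_m) = (N!/(N−m)!) · (Z_{N−m,β}/Z_{N,β}) · ∏_{1≤j<k≤m}|e^{ix_j}−e^{ix_k}|^β · E_{CβE_{N−m}}[ |X_{N−m}(1)|^{mβ} ] · E_{CJ_{N−m,β,mβ/2}}[ ∏_{j=2}^m |q_{N−m}^{β,mβ/2}(e^{i(x_j−x_1)})|^β ]. -/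
open MeasureTheory Real Finset

noncomputable section

/-- The CβE weight `∏_{j<k} |e^{iθ_j} - e^{iθ_k}|^β`. -/
def cbeWeight (β : ℝ) (N : ℕ) (θ : Fin N → ℝ) : ℝ :=
  ∏ p ∈ Finset.univ.filter (fun p : Fin N × Fin N => p.1 < p.2),
    ‖Complex.exp ((θ p.1 : ℂ) * Complex.I) - Complex.exp ((θ p.2 : ℂ) * Complex.I)‖ ^ β

/-- The cube `[-π, π)^N`. -/
def cbeDomain (N : ℕ) : Set (Fin N → ℝ) := Set.univ.pi fun _ => Set.Ico (-π) π

/-- Normalisation constant of the CβE. -/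
def cbeZ (β : ℝ) (N : ℕ) : ℝ := ∫ θ in cbeDomain N, cbeWeight β N θ

/-- Expectation with respect to the CβE. -/
def cbeExp (β : ℝ) (N : ℕ) (F : (Fin N → ℝ) → ℝ) : ℝ :=
  (∫ θ in cbeDomain N, F θ * cbeWeight β N θ) / cbeZ β N

/-- The characteristic polynomial `X_N(z) = ∏_j (1 - z e^{-iθ_j})`. -/
def charPoly (N : ℕ) (θ : Fin N → ℝ) (z : ℂ) : ℂ :=
  ∏ j : Fin N, (1 - z * Complex.exp (-(θ j : ℂ) * Complex.I))

/-- The circular Jacobi weight. -/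
def cjWeight (β δ : ℝ) (N : ℕ) (θ : Fin N → ℝ) : ℝ :=
  cbeWeight β N θ * ∏ j : Fin N, ‖1 - Complex.exp ((θ j : ℂ) * Complex.I)‖ ^ (2 * δ)

/-- Expectation with respect to the circular Jacobi β ensemble `CJ_{N,β,δ}`. -/
def cjExp (β δ : ℝ) (N : ℕ) (F : (Fin N → ℝ) → ℝ) : ℝ :=
  (∫ θ in cbeDomain N, F θ * cjWeight β δ N θ) / ∫ θ in cbeDomain N, cjWeight β δ N θ

/-- The normalised characteristic polynomial `q_N^{β,δ}(z) = ∏_j (z - e^{iθ_j})/(1 - e^{iθ_j})`. -/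
def qPoly (N : ℕ) (θ : Fin N → ℝ) (z : ℂ) : ℂ :=
  ∏ j : Fin N, (z - Complex.exp ((θ j : ℂ) * Complex.I)) / (1 - Complex.exp ((θ j : ℂ) * Complex.I))

/-- The `m`-th correlation function of the CβE with `N = m + k` points:
`ρ_{N,β}^{(m)}(x) = (N!/(N-m)!) (1/Z_{N,β}) ∫_{[-π,π)^{N-m}} w_{N,β}(x, θ) dθ`. -/
def cbeCorr (β : ℝ) (m k : ℕ) (x : Fin m → ℝ) : ℝ :=
  ((m + k).factorial : ℝ) / (k.factorial : ℝ) / cbeZ β (m + k) *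
    ∫ θ in cbeDomain k, cbeWeight β (m + k) (Fin.append x θ)

open scoped ENNReal

def ec (t : ℝ) : ℂ := Complex.exp ((t : ℂ) * Complex.I)

lemma ec_def (t : ℝ) : ec t = Complex.exp ((t : ℂ) * Complex.I) := rfl

lemma cbeWeight_eq (β : ℝ) (N : ℕ) (θ : Fin N → ℝ) :
    cbeWeight β N θ = ∏ p ∈ Finset.univ.filter (fun p : Fin N × Fin N => p.1 < p.2),
      ‖ec (θ p.1) - ec (θ p.2)‖ ^ β := rfl

lemma cont_rpow {α : Type*} [TopologicalSpace α] {f : α → ℝ} (hf : Continuous f) {p : ℝ}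
    (hp : 0 ≤ p) : Continuous fun a => f a ^ p :=
  continuous_iff_continuousAt.2 fun a =>
    (Real.continuousAt_rpow_const _ _ (Or.inr hp)).comp hf.continuousAt

lemma cont_ec {k : ℕ} (i : Fin k) : Continuous fun θ : Fin k → ℝ => ec (θ i) :=
  Complex.continuous_exp.comp
    ((Complex.continuous_ofReal.comp (continuous_apply i)).mul continuous_const)

lemma cont_cbeWeight (β : ℝ) (hβ : 0 < β) (N : ℕ) : Continuous (cbeWeight β N) := by
  unfold cbeWeight
  refine continuous_finset_prod _ fun p _ => cont_rpow ?_ hβ.le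
  exact continuous_norm.comp ((cont_ec p.1).sub (cont_ec p.2))

lemma measurableSet_cbeDomain (k : ℕ) : MeasurableSet (cbeDomain k) :=
  MeasurableSet.univ_pi fun _ => measurableSet_Ico

lemma restrict_pi {k : ℕ} (s : Fin k → Set ℝ) (hs : ∀ i, MeasurableSet (s i)) :
    (volume : Measure (Fin k → ℝ)).restrict (Set.univ.pi s)
      = Measure.pi (fun i => (volume : Measure ℝ).restrict (s i)) := by
  refine (Measure.pi_eq fun t ht => ?_).symm
  rw [Measure.restrict_apply (MeasurableSet.univ_pi ht), ← Set.pi_inter_distrib, volume_pi_pi]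
  exact Finset.prod_congr rfl fun i _ => (Measure.restrict_apply (ht i)).symm

lemma volume_cbeDomain (k : ℕ) :
    volume (cbeDomain k) = ENNReal.ofReal (2 * π) ^ k := by
  unfold cbeDomain
  rw [volume_pi_pi]
  simp [Real.volume_Ico, two_mul]

lemma integral_pos_of {k : ℕ} {f : (Fin k → ℝ) → ℝ} (hf : Continuous f) (h0 : ∀ θ, 0 ≤ f θ)
    (hnull : volume {θ : Fin k → ℝ | θ ∈ cbeDomain k ∧ f θ = 0} = 0) :
    0 < ∫ θ in cbeDomain k, f θ := by
  have hint : IntegrableOn f (cbeDomain k) := by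
    refine (hf.continuousOn.integrableOn_compact
      (isCompact_univ_pi fun _ => isCompact_Icc (a := -π) (b := π))).mono_set ?_
    exact Set.pi_mono fun i _ => Set.Ico_subset_Icc_self
  rw [setIntegral_pos_iff_support_of_nonneg_ae (ae_of_all _ h0) hint]
  have hsub : cbeDomain k ⊆ (Function.support f ∩ cbeDomain k) ∪
      {θ : Fin k → ℝ | θ ∈ cbeDomain k ∧ f θ = 0} := by
    intro θ hθ
    by_cases h : f θ = 0
    · exact Or.inr ⟨hθ, h⟩
    · exact Or.inl ⟨h, hθ⟩
  have h1 := (measure_mono (μ := (volume : Measure (Fin k → ℝ))) hsub).trans (measure_union_le _ _)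
  rw [hnull, add_zero, volume_cbeDomain] at h1
  have h2 : (0 : ℝ≥0∞) < ENNReal.ofReal (2 * π) ^ k := by
    apply ENNReal.pow_pos
    rw [ENNReal.ofReal_pos]
    positivity
  exact lt_of_lt_of_le h2 h1

lemma null_eval {k : ℕ} (l : Fin k) (c : ℝ) : volume {θ : Fin k → ℝ | θ l = c} = 0 := by
  rw [volume_pi]
  exact Measure.pi_hyperplane (fun _ : Fin k => (volume : Measure ℝ)) l c

lemma null_diag {k : ℕ} {j l : Fin k} (h : j ≠ l) :
    volume {θ : Fin k → ℝ | θ j = θ l} = 0 := by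
  set K : Submodule ℝ (Fin k → ℝ) :=
    LinearMap.ker ((LinearMap.proj j : (Fin k → ℝ) →ₗ[ℝ] ℝ) - LinearMap.proj l)
  have hset : {θ : Fin k → ℝ | θ j = θ l} = (K : Set (Fin k → ℝ)) := by
    ext θ
    simp [K, LinearMap.mem_ker, sub_eq_zero]
  have hK : K ≠ ⊤ := by
    intro htop
    have h1 : (Pi.single j 1 : Fin k → ℝ) ∈ K := htop ▸ Submodule.mem_top
    simp only [K, LinearMap.mem_ker, LinearMap.sub_apply, LinearMap.proj_apply] at h1
    rw [Pi.single_eq_same, Pi.single_eq_of_ne (Ne.symm h)] at h1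
    norm_num at h1
  rw [hset]
  exact Measure.addHaar_submodule volume K hK

lemma abs_ec (t : ℝ) : ‖ec t‖ = 1 := Complex.norm_exp_ofReal_mul_I t

lemma ec_zero : ec 0 = 1 := by simp [ec]

lemma ec_add_int (t : ℝ) (n : ℤ) : ec (t + n * (2 * π)) = ec t := by
  unfold ec
  push_cast
  rw [add_mul, Complex.exp_add,
    show ((n : ℂ) * (2 * π)) * Complex.I = (n : ℂ) * (2 * π * Complex.I) by ring,
    Complex.exp_int_mul_two_pi_mul_I, mul_one]

lemma ec_shift (a b c : ℝ) :
    ‖ec (a + c) - ec (b + c)‖ = ‖ec a - ec b‖ := by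
  have h : ec (a + c) - ec (b + c) = (ec a - ec b) * ec c := by
    unfold ec; push_cast
    rw [sub_mul, ← Complex.exp_add, ← Complex.exp_add]
    ring_nf
  rw [h, norm_mul, abs_ec, mul_one]

lemma ec_inj {s t : ℝ} (hs : s ∈ Set.Ico (-π) π) (ht : t ∈ Set.Ico (-π) π)
    (h : ec s = ec t) : s = t := by
  unfold ec at h
  rw [Complex.exp_eq_exp_iff_exists_int] at h
  obtain ⟨n, hn⟩ := h
  have h2 : (s : ℂ) * Complex.I = ((t : ℂ) + n * (2 * π)) * Complex.I := by
    rw [hn]; ring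
  have h2' := mul_right_cancel₀ Complex.I_ne_zero h2
  have h3 : s = t + n * (2 * π) := by exact_mod_cast h2'
  have hpi := Real.pi_pos
  have hn1 : (n : ℝ) < 1 := by nlinarith [hs.1, hs.2, ht.1, ht.2]
  have hn2 : (-1 : ℝ) < n := by nlinarith [hs.1, hs.2, ht.1, ht.2]
  have : n = 0 := by
    have a1 : n < 1 := by exact_mod_cast hn1
    have a2 : (-1 : ℤ) < n := by exact_mod_cast hn2
    omega
  rw [this] at h3; simpa using h3



lemma cbeWeight_nonneg (β : ℝ) (N : ℕ) (θ : Fin N → ℝ) : 0 ≤ cbeWeight β N θ :=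
  Finset.prod_nonneg fun p _ => Real.rpow_nonneg (norm_nonneg _) _

lemma cjWeight_nonneg (β δ : ℝ) (N : ℕ) (θ : Fin N → ℝ) : 0 ≤ cjWeight β δ N θ :=
  mul_nonneg (cbeWeight_nonneg β N θ)
    (Finset.prod_nonneg fun j _ => Real.rpow_nonneg (norm_nonneg _) _)

lemma zero_mem_Ico : (0 : ℝ) ∈ Set.Ico (-π) π :=
  ⟨by linarith [Real.pi_pos], Real.pi_pos⟩

lemma cbe_zero_null {β : ℝ} (hβ : 0 < β) (k : ℕ) :
    volume {θ : Fin k → ℝ | θ ∈ cbeDomain k ∧ cbeWeight β k θ = 0} = 0 := by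
  have hsub : {θ : Fin k → ℝ | θ ∈ cbeDomain k ∧ cbeWeight β k θ = 0} ⊆
      ⋃ p : Fin k × Fin k, {θ : Fin k → ℝ | p.1 ≠ p.2 ∧ θ p.1 = θ p.2} := by
    rintro θ ⟨hd, hw⟩
    rw [cbeWeight_eq, Finset.prod_eq_zero_iff] at hw
    obtain ⟨p, hp, hfac⟩ := hw
    have hlt : p.1 < p.2 := (Finset.mem_filter.1 hp).2
    have habs : ‖ec (θ p.1) - ec (θ p.2)‖ = 0 :=
      (Real.rpow_eq_zero (norm_nonneg _) (ne_of_gt hβ)).1 hfac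
    have hec : ec (θ p.1) = ec (θ p.2) := by rwa [norm_eq_zero, sub_eq_zero] at habs
    have heq : θ p.1 = θ p.2 :=
      ec_inj (hd p.1 (Set.mem_univ _)) (hd p.2 (Set.mem_univ _)) hec
    exact Set.mem_iUnion.2 ⟨p, ne_of_lt hlt, heq⟩
  refine measure_mono_null hsub (measure_iUnion_null fun p => ?_)
  by_cases h : p.1 = p.2
  · have he : {θ : Fin k → ℝ | p.1 ≠ p.2 ∧ θ p.1 = θ p.2} = ∅ := by
      ext θ; simp [h]
    simp [he]
  · exact measure_mono_null (fun θ hθ => hθ.2) (null_diag h)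

lemma cbeZ_pos {β : ℝ} (hβ : 0 < β) (k : ℕ) : 0 < cbeZ β k :=
  integral_pos_of (cont_cbeWeight β hβ k) (cbeWeight_nonneg β k) (cbe_zero_null hβ k)

lemma cjZ_pos {β δ : ℝ} (hβ : 0 < β) (hδ : 0 < δ) (k : ℕ) :
    0 < ∫ θ in cbeDomain k, cjWeight β δ k θ := by
  refine integral_pos_of ?_ (cjWeight_nonneg β δ k) ?_
  · refine (cont_cbeWeight β hβ k).mul (continuous_finset_prod _ fun j _ => cont_rpow ?_ (by positivity))
    exact continuous_norm.comp (continuous_const.sub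
      (Complex.continuous_exp.comp
        ((Complex.continuous_ofReal.comp (continuous_apply j)).mul continuous_const)))
  · have hsub : {θ : Fin k → ℝ | θ ∈ cbeDomain k ∧ cjWeight β δ k θ = 0} ⊆
        {θ : Fin k → ℝ | θ ∈ cbeDomain k ∧ cbeWeight β k θ = 0} ∪
          ⋃ l : Fin k, {θ : Fin k → ℝ | θ l = 0} := by
      rintro θ ⟨hd, hw⟩
      unfold cjWeight at hw
      rcases mul_eq_zero.1 hw with hw | hw
      · exact Or.inl ⟨hd, hw⟩
      · rw [Finset.prod_eq_zero_iff] at hw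
        obtain ⟨l, _, hfac⟩ := hw
        have habs : ‖(1 : ℂ) - Complex.exp ((θ l : ℂ) * Complex.I)‖ = 0 :=
          (Real.rpow_eq_zero (norm_nonneg _) (by positivity)).1 hfac
        have hec : ec 0 = ec (θ l) := by
          rw [ec_zero]
          rw [norm_eq_zero, sub_eq_zero] at habs
          exact habs
        have : (0 : ℝ) = θ l := ec_inj zero_mem_Ico (hd l (Set.mem_univ _)) hec
        exact Or.inr (Set.mem_iUnion.2 ⟨l, this.symm⟩)
    refine measure_mono_null hsub (measure_union_null (cbe_zero_null hβ k)
      (measure_iUnion_null fun l => null_eval l 0))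

lemma weight_split (β : ℝ) {m k : ℕ} (x : Fin m → ℝ) (θ : Fin k → ℝ) :
    cbeWeight β (m + k) (Fin.append x θ)
      = cbeWeight β m x *
        ((∏ j : Fin m, ∏ l : Fin k, ‖ec (x j) - ec (θ l)‖ ^ β) *
          cbeWeight β k θ) := by
  classical
  rw [cbeWeight_eq, cbeWeight_eq, cbeWeight_eq]
  have hsplit : (Finset.univ.filter fun p : Fin (m + k) × Fin (m + k) => p.1 < p.2)
      = ((Finset.univ.filter fun p : Fin (m + k) × Fin (m + k) =>
            p.1 < p.2 ∧ (p.2 : ℕ) < m) ∪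
          Finset.univ.filter fun p : Fin (m + k) × Fin (m + k) =>
            (p.1 : ℕ) < m ∧ m ≤ (p.2 : ℕ)) ∪
        Finset.univ.filter fun p : Fin (m + k) × Fin (m + k) =>
          p.1 < p.2 ∧ m ≤ (p.1 : ℕ) := by
    ext p
    simp only [Finset.mem_filter, Finset.mem_union, Finset.mem_univ, true_and, Fin.lt_def]
    omega
  have hd1 : Disjoint
      ((Finset.univ.filter fun p : Fin (m + k) × Fin (m + k) => p.1 < p.2 ∧ (p.2 : ℕ) < m) ∪
        Finset.univ.filter fun p : Fin (m + k) × Fin (m + k) => (p.1 : ℕ) < m ∧ m ≤ (p.2 : ℕ))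
      (Finset.univ.filter fun p : Fin (m + k) × Fin (m + k) => p.1 < p.2 ∧ m ≤ (p.1 : ℕ)) := by
    rw [Finset.disjoint_left]
    intro p hp hp'
    simp only [Finset.mem_filter, Finset.mem_union, Finset.mem_univ, true_and, Fin.lt_def] at hp hp'
    omega
  have hd2 : Disjoint
      (Finset.univ.filter fun p : Fin (m + k) × Fin (m + k) => p.1 < p.2 ∧ (p.2 : ℕ) < m)
      (Finset.univ.filter fun p : Fin (m + k) × Fin (m + k) => (p.1 : ℕ) < m ∧ m ≤ (p.2 : ℕ)) := by
    rw [Finset.disjoint_left]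
    intro p hp hp'
    simp only [Finset.mem_filter, Finset.mem_univ, true_and, Fin.lt_def] at hp hp'
    omega
  rw [hsplit, Finset.prod_union hd1, Finset.prod_union hd2, mul_assoc]
  congr 1
  · -- left block
    refine (Finset.prod_bij' (fun a _ => (Fin.castAdd k a.1, Fin.castAdd k a.2))
      (fun p hp =>
        ((⟨(p.1 : ℕ), by
            have h1 := Fin.lt_def.1 (Finset.mem_filter.1 hp).2.1
            have h2 := (Finset.mem_filter.1 hp).2.2
            omega⟩ : Fin m),
         (⟨(p.2 : ℕ), (Finset.mem_filter.1 hp).2.2⟩ : Fin m)))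
      ?_ ?_ ?_ ?_ ?_).symm
    · intro a ha
      have h1 := Fin.lt_def.1 (Finset.mem_filter.1 ha).2
      simp only [Finset.mem_filter, Finset.mem_univ, true_and, Fin.lt_def, Fin.coe_castAdd]
      exact ⟨h1, a.2.isLt⟩
    · intro p hp
      have h1 := Fin.lt_def.1 (Finset.mem_filter.1 hp).2.1
      simp only [Finset.mem_filter, Finset.mem_univ, true_and, Fin.lt_def]
      exact h1
    · intro a _
      apply Prod.ext <;> apply Fin.ext <;> simp
    · intro p _
      apply Prod.ext <;> apply Fin.ext <;> simp
    · intro a _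
      rw [Fin.append_left, Fin.append_left]
  congr 1
  · -- mixed block
    conv_rhs => rw [← Finset.prod_product']
    refine (Finset.prod_bij' (fun a _ => (Fin.castAdd k a.1, Fin.natAdd m a.2))
      (fun p hp =>
        ((⟨(p.1 : ℕ), (Finset.mem_filter.1 hp).2.1⟩ : Fin m),
         (⟨(p.2 : ℕ) - m, by
            have h1 := (Finset.mem_filter.1 hp).2.2
            have h2 := (p.2).isLt
            omega⟩ : Fin k)))
      ?_ ?_ ?_ ?_ ?_).symm
    · intro a _
      simp only [Finset.mem_filter, Finset.mem_univ, true_and, Fin.coe_castAdd, Fin.coe_natAdd]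
      exact ⟨a.1.isLt, Nat.le_add_right m a.2⟩
    · intro p _
      exact Finset.mem_product.2 ⟨Finset.mem_univ _, Finset.mem_univ _⟩
    · intro a _
      apply Prod.ext <;> apply Fin.ext <;> simp
    · intro p hp
      have h1 := (Finset.mem_filter.1 hp).2.2
      apply Prod.ext <;> apply Fin.ext <;> simp <;> omega
    · intro a _
      rw [Fin.append_left, Fin.append_right]
  · -- right block
    refine (Finset.prod_bij' (fun a _ => (Fin.natAdd m a.1, Fin.natAdd m a.2))
      (fun p hp =>
        ((⟨(p.1 : ℕ) - m, by
            have h1 := (Finset.mem_filter.1 hp).2.2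
            have h2 := Fin.lt_def.1 (Finset.mem_filter.1 hp).2.1
            have h3 := (p.2).isLt
            omega⟩ : Fin k),
         (⟨(p.2 : ℕ) - m, by
            have h1 := (Finset.mem_filter.1 hp).2.2
            have h2 := Fin.lt_def.1 (Finset.mem_filter.1 hp).2.1
            have h3 := (p.2).isLt
            omega⟩ : Fin k)))
      ?_ ?_ ?_ ?_ ?_).symm
    · intro a ha
      have h1 := Fin.lt_def.1 (Finset.mem_filter.1 ha).2
      simp only [Finset.mem_filter, Finset.mem_univ, true_and, Fin.lt_def, Fin.coe_natAdd]
      exact ⟨by omega, Nat.le_add_right m a.1⟩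
    · intro p hp
      have h1 := Fin.lt_def.1 (Finset.mem_filter.1 hp).2.1
      have h2 := (Finset.mem_filter.1 hp).2.2
      simp only [Finset.mem_filter, Finset.mem_univ, true_and, Fin.lt_def]
      omega
    · intro a _
      apply Prod.ext <;> apply Fin.ext <;> simp
    · intro p hp
      have h1 := (Finset.mem_filter.1 hp).2.2
      have h2 := Fin.lt_def.1 (Finset.mem_filter.1 hp).2.1
      apply Prod.ext <;> apply Fin.ext <;> simp <;> omega
    · intro a _
      rw [Fin.append_right, Fin.append_right]

lemma cbeWeight_shift (β : ℝ) {k : ℕ} (θ : Fin k → ℝ) (c : ℝ) :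
    cbeWeight β k (fun l => θ l + c) = cbeWeight β k θ := by
  rw [cbeWeight_eq, cbeWeight_eq]
  exact Finset.prod_congr rfl fun p _ => by rw [ec_shift]

lemma charPoly_weight {β : ℝ} (m k : ℕ) (θ : Fin k → ℝ) :
    ‖charPoly k θ 1‖ ^ ((m : ℝ) * β) * cbeWeight β k θ
      = cjWeight β ((m : ℝ) * β / 2) k θ := by
  unfold charPoly cjWeight
  rw [mul_comm]
  congr 1
  rw [norm_prod, ← Real.finset_prod_rpow _ _ (fun i _ => norm_nonneg _) _]
  refine Finset.prod_congr rfl fun j _ => ?_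
  rw [show 2 * ((m : ℝ) * β / 2) = (m : ℝ) * β by ring]
  congr 1
  rw [one_mul]
  have h1 : (1 : ℂ) - Complex.exp (-(θ j : ℂ) * Complex.I)
      = Complex.exp (-(θ j : ℂ) * Complex.I) * (Complex.exp ((θ j : ℂ) * Complex.I) - 1) := by
    rw [mul_sub, ← Complex.exp_add, mul_one,
      show -(θ j : ℂ) * Complex.I + (θ j : ℂ) * Complex.I = 0 by ring, Complex.exp_zero]
  rw [h1, norm_mul,
    show -(θ j : ℂ) = ((-(θ j) : ℝ) : ℂ) by push_cast; ring,
    Complex.norm_exp_ofReal_mul_I, one_mul, norm_sub_rev]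

lemma pointwise_key {β : ℝ} (hβ : 0 < β) {m k : ℕ} (hm : 1 ≤ m) (x : Fin m → ℝ)
    (θ : Fin k → ℝ) (hθ : ∀ l, Complex.exp ((θ l : ℂ) * Complex.I) ≠ 1) :
    (∏ j ∈ Finset.univ.filter (fun j : Fin m => (j : ℕ) ≠ 0),
        ‖qPoly k θ (Complex.exp (((x j - x ⟨0, hm⟩ : ℝ) : ℂ) * Complex.I))‖ ^ β)
      * cjWeight β ((m : ℝ) * β / 2) k θ
    = (∏ j : Fin m, ∏ l : Fin k,
        ‖ec (x j) - ec (θ l + x ⟨0, hm⟩)‖ ^ β)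
        * cbeWeight β k (fun l => θ l + x ⟨0, hm⟩) := by
  classical
  set a0 : Fin m := ⟨0, hm⟩ with ha0
  set x0 : ℝ := x a0 with hx0
  have hfe : Finset.univ.filter (fun j : Fin m => (j : ℕ) ≠ 0) = Finset.univ.erase a0 := by
    ext j
    simp only [Finset.mem_filter, Finset.mem_univ, true_and, Finset.mem_erase, and_true]
    constructor
    · intro h h'
      exact h (by rw [h', ha0])
    · intro h h'
      exact h (Fin.ext h')
  have habne : ∀ l, (1 : ℂ) - ec (θ l) ≠ 0 := fun l => sub_ne_zero.2 (Ne.symm (hθ l))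
  have hab : ∀ l, (0 : ℝ) < ‖1 - ec (θ l)‖ := fun l => norm_pos_iff.mpr (habne l)
  have hq : ∀ j : Fin m,
      ‖qPoly k θ (Complex.exp (((x j - x0 : ℝ) : ℂ) * Complex.I))‖ ^ β
      = ∏ l : Fin k, (‖ec (x j - x0) - ec (θ l)‖ ^ β
          / ‖1 - ec (θ l)‖ ^ β) := by
    intro j
    unfold qPoly
    rw [norm_prod, ← Real.finset_prod_rpow _ _ (fun l _ => by positivity) β]
    refine Finset.prod_congr rfl fun l _ => ?_
    rw [norm_div, Real.div_rpow (norm_nonneg _) (norm_nonneg _)]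
    rfl
  rw [hfe]
  rw [Finset.prod_congr rfl fun j (_ : j ∈ Finset.univ.erase a0) => hq j]
  rw [Finset.prod_comm]
  unfold cjWeight
  have key : ∀ l : Fin k, (∏ j ∈ Finset.univ.erase a0,
        (‖ec (x j - x0) - ec (θ l)‖ ^ β / ‖1 - ec (θ l)‖ ^ β))
      * ‖1 - Complex.exp ((θ l : ℂ) * Complex.I)‖ ^ (2 * ((m : ℝ) * β / 2))
      = ∏ j : Fin m, ‖ec (x j) - ec (θ l + x0)‖ ^ β := by
    intro l
    have h2d : ‖1 - Complex.exp ((θ l : ℂ) * Complex.I)‖ ^ (2 * ((m : ℝ) * β / 2))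
        = ‖1 - ec (θ l)‖ ^ (β * ((m - 1 : ℕ) : ℝ) + β) := by
      rw [ec_def]
      congr 1
      push_cast [Nat.cast_sub hm]
      ring
    rw [h2d, Finset.prod_div_distrib, Finset.prod_const, Finset.card_erase_of_mem (Finset.mem_univ _),
      Finset.card_univ, Fintype.card_fin, Real.rpow_add (hab l),
      ← Real.rpow_natCast (‖1 - ec (θ l)‖ ^ β) (m - 1), ← Real.rpow_mul (hab l).le]
    have hD : ‖1 - ec (θ l)‖ ^ (β * ((m - 1 : ℕ) : ℝ)) ≠ 0 :=
      ne_of_gt (Real.rpow_pos_of_pos (hab l) _)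
    rw [show (∏ j ∈ Finset.univ.erase a0, ‖ec (x j - x0) - ec (θ l)‖ ^ β)
          / ‖1 - ec (θ l)‖ ^ (β * ((m - 1 : ℕ) : ℝ))
          * (‖1 - ec (θ l)‖ ^ (β * ((m - 1 : ℕ) : ℝ)) * ‖1 - ec (θ l)‖ ^ β)
        = (∏ j ∈ Finset.univ.erase a0, ‖ec (x j - x0) - ec (θ l)‖ ^ β)
          * ‖1 - ec (θ l)‖ ^ β
          * (‖1 - ec (θ l)‖ ^ (β * ((m - 1 : ℕ) : ℝ))
              / ‖1 - ec (θ l)‖ ^ (β * ((m - 1 : ℕ) : ℝ))) from by ring,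
      div_self hD, mul_one]
    have hC0 : ‖1 - ec (θ l)‖ ^ β = ‖ec x0 - ec (θ l + x0)‖ ^ β := by
      have h := ec_shift 0 (θ l) x0
      rw [zero_add, ec_zero] at h
      rw [← h]
    have hCj : ∀ j : Fin m, ‖ec (x j - x0) - ec (θ l)‖ ^ β
        = ‖ec (x j) - ec (θ l + x0)‖ ^ β := by
      intro j
      have h := ec_shift (x j - x0) (θ l) x0
      rw [sub_add_cancel] at h
      rw [← h]
    rw [Finset.prod_congr rfl fun j (_ : j ∈ Finset.univ.erase a0) => hCj j, hC0]
    rw [← Finset.mul_prod_erase Finset.univ _ (Finset.mem_univ a0), ← hx0]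
    ring

  calc (∏ l : Fin k, ∏ j ∈ Finset.univ.erase a0,
          (‖ec (x j - x0) - ec (θ l)‖ ^ β / ‖1 - ec (θ l)‖ ^ β))
        * (cbeWeight β k θ * ∏ l : Fin k,
            ‖1 - Complex.exp ((θ l : ℂ) * Complex.I)‖ ^ (2 * ((m : ℝ) * β / 2)))
      = cbeWeight β k θ * ∏ l : Fin k, ((∏ j ∈ Finset.univ.erase a0,
          (‖ec (x j - x0) - ec (θ l)‖ ^ β / ‖1 - ec (θ l)‖ ^ β))
          * ‖1 - Complex.exp ((θ l : ℂ) * Complex.I)‖ ^ (2 * ((m : ℝ) * β / 2))) := by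
        rw [Finset.prod_mul_distrib]; ring
    _ = cbeWeight β k θ * ∏ l : Fin k, ∏ j : Fin m,
          ‖ec (x j) - ec (θ l + x0)‖ ^ β := by
        rw [Finset.prod_congr rfl fun l _ => key l]
    _ = (∏ j : Fin m, ∏ l : Fin k, ‖ec (x j) - ec (θ l + x0)‖ ^ β)
          * cbeWeight β k (fun l => θ l + x0) := by
        rw [cbeWeight_shift β θ x0, Finset.prod_comm]; ring

lemma integral_translate {k : ℕ} (G : (Fin k → ℝ) → ℝ) (hG : Measurable G)
    (hper : ∀ (θ : Fin k → ℝ) (n : Fin k → ℤ), G (fun i => θ i + (n i) * (2 * π)) = G θ)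
    (c : ℝ) :
    ∫ θ in cbeDomain k, G (fun i => θ i + c) = ∫ θ in cbeDomain k, G θ := by
  have hfact : Fact (0 < 2 * π) := ⟨by positivity⟩
  set L : AddCircle (2 * π) → ℝ :=
    fun y => ((AddCircle.equivIco (2 * π) (-π) y : Set.Ico (-π) (-π + 2 * π)) : ℝ) with hL
  have hLmeas : Measurable L :=
    measurable_subtype_coe.comp (AddCircle.measurableEquivIco (2 * π) (-π)).measurable_toFun
  have hLcoe : ∀ y : AddCircle (2 * π), ((L y : ℝ) : AddCircle (2 * π)) = y := by
    intro y
    have h := (AddCircle.equivIco (2 * π) (-π)).symm_apply_apply y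
    exact h
  have hrep : ∀ s t : ℝ, ((s : AddCircle (2 * π)) = (t : AddCircle (2 * π))) →
      ∃ n : ℤ, s = t + n * (2 * π) := by
    intro s t h
    have h2 := (QuotientAddGroup.eq_iff_sub_mem).1 h
    obtain ⟨n, hn⟩ := AddSubgroup.mem_zmultiples_iff.1 h2
    refine ⟨n, ?_⟩
    rw [zsmul_eq_mul] at hn
    linarith [hn]
  set Φ : (Fin k → ℝ) → (Fin k → AddCircle (2 * π)) := fun θ i => (θ i : AddCircle (2 * π)) with hΦ
  have hmp : MeasurePreserving Φ
      (Measure.pi fun _ : Fin k => volume.restrict (Set.Ioc (-π) (-π + 2 * π)))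
      (Measure.pi fun _ : Fin k => (volume : Measure (AddCircle (2 * π)))) :=
    measurePreserving_pi _ _ fun _ => AddCircle.measurePreserving_mk (2 * π) (-π)
  have hres : (volume : Measure (Fin k → ℝ)).restrict (cbeDomain k)
      = Measure.pi fun _ : Fin k => volume.restrict (Set.Ioc (-π) (-π + 2 * π)) := by
    rw [show cbeDomain k = Set.univ.pi fun _ : Fin k => Set.Ico (-π) π from rfl,
      restrict_pi _ (fun _ => measurableSet_Ico)]
    refine congrArg Measure.pi (funext fun _ => ?_)
    have hb : -π + 2 * π = π := by ring
    rw [hb]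
    exact Measure.restrict_congr_set Ico_ae_eq_Ioc
  have key : ∀ H : (Fin k → ℝ) → ℝ, Measurable H →
      (∀ (θ : Fin k → ℝ) (n : Fin k → ℤ), H (fun i => θ i + (n i) * (2 * π)) = H θ) →
      ∫ θ in cbeDomain k, H θ
        = ∫ y, H (fun i => L (y i))
            ∂(Measure.pi fun _ : Fin k => (volume : Measure (AddCircle (2 * π)))) := by
    intro H hH hHper
    have hHt : Measurable fun y : Fin k → AddCircle (2 * π) => H (fun i => L (y i)) :=
      hH.comp (measurable_pi_iff.2 fun i => hLmeas.comp (measurable_pi_apply i))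
    rw [hres, ← hmp.map_eq, integral_map hmp.measurable.aemeasurable hHt.aestronglyMeasurable]
    refine integral_congr_ae (Filter.Eventually.of_forall fun θ => ?_)
    have hex : ∀ i, ∃ n : ℤ, L ((θ i : AddCircle (2 * π))) = θ i + n * (2 * π) :=
      fun i => hrep _ _ (hLcoe _)
    choose n hn using hex
    calc H θ = H (fun i => θ i + n i * (2 * π)) := (hHper θ n).symm
      _ = H (fun i => L (Φ θ i)) := by
          congr 1
          funext i
          exact (hn i).symm
  have hGm' : Measurable fun θ : Fin k → ℝ => G (fun i => θ i + c) := by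
    refine hG.comp (measurable_pi_iff.2 fun i => ?_)
    exact (measurable_pi_apply i).add measurable_const
  have hper' : ∀ (θ : Fin k → ℝ) (n : Fin k → ℤ),
      (fun θ : Fin k → ℝ => G (fun i => θ i + c)) (fun i => θ i + (n i) * (2 * π))
        = G (fun i => θ i + c) := by
    intro θ n
    have := hper (fun i => θ i + c) n
    simp only at this ⊢
    rw [← this]
    congr 1
    funext i
    ring
  rw [key _ hGm' hper', key G hG hper]
  have hadd := integral_add_right_eq_self
    (μ := Measure.pi fun _ : Fin k => (volume : Measure (AddCircle (2 * π))))
    (fun y : Fin k → AddCircle (2 * π) => G (fun i => L (y i)))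
    (fun _ : Fin k => (c : AddCircle (2 * π)))
  rw [← hadd]
  refine integral_congr_ae (Filter.Eventually.of_forall fun y => ?_)
  have hex : ∀ i, ∃ n : ℤ, L (y i) + c = L (y i + (c : AddCircle (2 * π))) + n * (2 * π) := by
    intro i
    refine hrep _ _ ?_
    rw [AddCircle.coe_add, hLcoe, hLcoe]
  choose n hn using hex
  calc G (fun i => L (y i) + c)
      = G (fun i => L (y i + (c : AddCircle (2 * π))) + n i * (2 * π)) := by
        congr 1
        funext i
        exact hn i
    _ = G (fun i => L (y i + (c : AddCircle (2 * π)))) := hper _ n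
    _ = G (fun i => L ((y + (fun _ : Fin k => (c : AddCircle (2 * π)))) i)) := rfl

/-- Proposition `CbetaECorr`: representation of the `m`-point correlation function of
`CβE_N` (with `N = m + k`, `k ≥ 1`) in terms of moments of the characteristic polynomial and of
the normalised characteristic polynomial of the circular Jacobi ensemble `CJ_{N-m,β,mβ/2}`. -/
theorem statement1 (β : ℝ) (hβ : 0 < β) (m k : ℕ) (hm : 1 ≤ m) (hk : 1 ≤ k)
    (x : Fin m → ℝ) :
    cbeCorr β m k x
    = ((m + k).factorial : ℝ) / (k.factorial : ℝ) * (cbeZ β k / cbeZ β (m + k))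
      * (∏ p ∈ Finset.univ.filter (fun p : Fin m × Fin m => p.1 < p.2),
          ‖Complex.exp ((x p.1 : ℂ) * Complex.I)
            - Complex.exp ((x p.2 : ℂ) * Complex.I)‖ ^ β)
      * cbeExp β k (fun θ => ‖charPoly k θ 1‖ ^ ((m : ℝ) * β))
      * cjExp β ((m : ℝ) * β / 2) k (fun θ =>
          ∏ j ∈ Finset.univ.filter (fun j : Fin m => (j : ℕ) ≠ 0),
            ‖qPoly k θ
              (Complex.exp (((x j - x ⟨0, hm⟩ : ℝ) : ℂ) * Complex.I))‖ ^ β) := by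
  classical
  set x0 : ℝ := x ⟨0, hm⟩ with hx0
  set M : (Fin k → ℝ) → ℝ :=
    fun φ => ∏ j : Fin m, ∏ l : Fin k, ‖ec (x j) - ec (φ l)‖ ^ β with hM
  set G : (Fin k → ℝ) → ℝ := fun φ => M φ * cbeWeight β k φ with hG
  have hGcont : Continuous G := by
    refine Continuous.mul ?_ (cont_cbeWeight β hβ k)
    exact continuous_finset_prod _ fun j _ => continuous_finset_prod _ fun l _ =>
      cont_rpow (continuous_norm.comp (continuous_const.sub (cont_ec l))) hβ.le
  have hGper : ∀ (θ : Fin k → ℝ) (n : Fin k → ℤ), G (fun i => θ i + n i * (2 * π)) = G θ := by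
    intro θ n
    simp only [hG, hM]
    congr 1
    · refine Finset.prod_congr rfl fun j _ => Finset.prod_congr rfl fun l _ => ?_
      rw [ec_add_int]
    · rw [cbeWeight_eq, cbeWeight_eq]
      refine Finset.prod_congr rfl fun p _ => ?_
      rw [ec_add_int, ec_add_int]
  have hI : (∫ θ in cbeDomain k, cbeWeight β (m + k) (Fin.append x θ))
      = cbeWeight β m x * ∫ θ in cbeDomain k, G θ := by
    rw [← MeasureTheory.integral_const_mul]
    exact integral_congr_ae (Filter.Eventually.of_forall fun θ => weight_split β x θ)
  have hnum : (∫ θ in cbeDomain k, ‖charPoly k θ 1‖ ^ ((m : ℝ) * β)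
        * cbeWeight β k θ)
      = ∫ θ in cbeDomain k, cjWeight β ((m : ℝ) * β / 2) k θ :=
    integral_congr_ae (Filter.Eventually.of_forall fun θ => charPoly_weight m k θ)
  have hae : ∀ᵐ θ ∂(volume.restrict (cbeDomain k)),
      (∏ j ∈ Finset.univ.filter (fun j : Fin m => (j : ℕ) ≠ 0),
          ‖qPoly k θ
            (Complex.exp (((x j - x0 : ℝ) : ℂ) * Complex.I))‖ ^ β)
        * cjWeight β ((m : ℝ) * β / 2) k θ = G (fun l => θ l + x0) := by
    have h1 : ∀ᵐ θ ∂(volume.restrict (cbeDomain k)), θ ∈ cbeDomain k :=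
      ae_restrict_mem (measurableSet_cbeDomain k)
    have h2 : ∀ᵐ θ ∂(volume.restrict (cbeDomain k)), ∀ l, θ l ≠ 0 := by
      rw [MeasureTheory.ae_iff]
      have hsub : {θ : Fin k → ℝ | ¬ ∀ l, θ l ≠ 0} ⊆ ⋃ l, {θ : Fin k → ℝ | θ l = 0} := by
        intro θ hθ
        push_neg at hθ
        obtain ⟨l, hl⟩ := hθ
        exact Set.mem_iUnion.2 ⟨l, hl⟩
      have h0 : volume (⋃ l, {θ : Fin k → ℝ | θ l = 0}) = 0 :=
        measure_iUnion_null fun l => null_eval l 0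
      exact le_antisymm (le_trans (measure_mono hsub)
        (le_trans (Measure.restrict_apply_le _ _) h0.le)) (zero_le)
    filter_upwards [h1, h2] with θ hθD hθ0
    refine pointwise_key hβ hm x θ fun l hcon => ?_
    have h3 : (0 : ℝ) = θ l :=
      ec_inj zero_mem_Ico (hθD l (Set.mem_univ _)) (by rw [ec_zero]; exact hcon.symm)
    exact hθ0 l h3.symm
  have hB : (∫ θ in cbeDomain k,
        (∏ j ∈ Finset.univ.filter (fun j : Fin m => (j : ℕ) ≠ 0),
          ‖qPoly k θ
            (Complex.exp (((x j - x0 : ℝ) : ℂ) * Complex.I))‖ ^ β)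
          * cjWeight β ((m : ℝ) * β / 2) k θ)
      = ∫ θ in cbeDomain k, G θ := by
    rw [integral_congr_ae hae]
    exact integral_translate G hGcont.measurable hGper x0
  have hZk := cbeZ_pos hβ k
  have hZ := cbeZ_pos hβ (m + k)
  have hA : 0 < ∫ θ in cbeDomain k, cjWeight β ((m : ℝ) * β / 2) k θ :=
    cjZ_pos hβ (by positivity) k
  rw [cbeCorr, hI]
  rw [show (∏ p ∈ Finset.univ.filter (fun p : Fin m × Fin m => p.1 < p.2),
      ‖Complex.exp ((x p.1 : ℂ) * Complex.I)
        - Complex.exp ((x p.2 : ℂ) * Complex.I)‖ ^ β) = cbeWeight β m x from rfl]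
  simp only [cbeExp, cjExp]
  rw [hnum, hB]
  field_simp

end
end

section
/- Let m ≥ 1 be an integer and let a, b ≥ 0 be real numbers such that a + (m−1)b/2 > 1 and ma > 1. Then ∫_{ℝ^m} ∏_{j=1}^m 1/(1 + |x_j|^a) · ∏_{1≤i<j≤m} 1/(1 + |x_i − x_j|^b) dx_1⋯dx_m < ∞. -/
open MeasureTheory ENNReal Finset

noncomputable def W (r t : ℝ) : ℝ≥0∞ := ENNReal.ofReal ((1 + |t|) ^ (-r))

lemma base_pos (t : ℝ) : (0:ℝ) < 1 + |t| := by positivity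

lemma base_one_le (t : ℝ) : (1:ℝ) ≤ 1 + |t| := by simp [abs_nonneg]

lemma measurable_W (r : ℝ) : Measurable (W r) := by
  apply Measurable.ennreal_ofReal
  exact (measurable_const.add measurable_abs).pow_const _

lemma W_add (r s t : ℝ) : W (r + s) t = W r t * W s t := by
  rw [W, W, W, ← ENNReal.ofReal_mul (by positivity), ← Real.rpow_add (base_pos t)]
  ring_nf

lemma W_anti {r : ℝ} (hr : 0 ≤ r) {u v : ℝ} (h : |u| ≤ |v|) : W r v ≤ W r u := by
  apply ENNReal.ofReal_le_ofReal
  rw [Real.rpow_neg (base_pos v).le, Real.rpow_neg (base_pos u).le]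
  apply inv_anti₀ (by positivity)
  exact Real.rpow_le_rpow (base_pos u).le (by linarith) hr

lemma W_le_one {r : ℝ} (hr : 0 ≤ r) (t : ℝ) : W r t ≤ 1 := by
  have h : W r t ≤ W r 0 := W_anti hr (by simp [abs_nonneg])
  have : W r 0 = 1 := by simp [W]
  rwa [this] at h

lemma W_neg (r t : ℝ) : W r (-t) = W r t := by simp [W, abs_neg]

lemma W_pow (r t : ℝ) (N : ℕ) : (W r t) ^ N = W (N * r) t := by
  rw [W, W, ← ENNReal.ofReal_pow (by positivity), ← Real.rpow_natCast ((1+|t|) ^ (-r)) N,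
    ← Real.rpow_mul (base_pos t).le]
  ring_nf

lemma lintegral_W_lt_top {r : ℝ} (hr : 1 < r) : ∫⁻ t : ℝ, W r t < ⊤ := by
  have hint : Integrable (fun t : ℝ => (1 + ‖t‖) ^ (-r)) :=
    integrable_one_add_norm (by simpa using hr)
  have := hint.2
  rw [HasFiniteIntegral] at this
  refine lt_of_le_of_lt ?_ this
  apply lintegral_mono
  intro t
  simp only [W, Real.norm_eq_abs]
  rw [← Real.enorm_eq_ofReal (by positivity)]

lemma lintegral_W_shift (s y : ℝ) : ∫⁻ t : ℝ, W s (t - y) = ∫⁻ t : ℝ, W s t := by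
  simpa [sub_eq_add_neg] using lintegral_add_right_eq_self (fun t => W s t) (-y)

lemma conv_bound {p q : ℝ} (hp : 0 ≤ p) (hq : 0 ≤ q) (y : ℝ) :
    ∫⁻ t : ℝ, W p t * W q (t - y) ≤ ∫⁻ t : ℝ, W (p + q) t := by
  rcases eq_or_lt_of_le hp with hp0 | hp0
  · simp only [← hp0, W, neg_zero, Real.rpow_zero, ENNReal.ofReal_one, one_mul, zero_add]
    exact le_of_eq (lintegral_W_shift q y)
  rcases eq_or_lt_of_le hq with hq0 | hq0
  · simp only [← hq0, W, neg_zero, Real.rpow_zero, ENNReal.ofReal_one, mul_one, add_zero]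
    exact le_refl _
  -- Hölder
  have hpq : (0:ℝ) < p + q := by linarith
  have hconj : ((p+q)/p).HolderConjugate ((p+q)/q) := by
    rw [Real.holderConjugate_iff]
    constructor
    · rw [lt_div_iff₀ hp0]; linarith
    · field_simp
  have hW1 : AEMeasurable (W p) (volume : Measure ℝ) := (measurable_W p).aemeasurable
  have hW2 : AEMeasurable (fun t => W q (t - y)) (volume : Measure ℝ) :=
    ((measurable_W q).comp (measurable_id.sub measurable_const)).aemeasurable
  have H := ENNReal.lintegral_mul_le_Lp_mul_Lq (volume : Measure ℝ) hconj hW1 hW2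
  have e1 : ∀ t : ℝ, W p t ^ ((p+q)/p) = W (p+q) t := by
    intro t
    rw [W, W, ENNReal.ofReal_rpow_of_nonneg (by positivity) (by positivity),
      ← Real.rpow_mul (by positivity : (0:ℝ) ≤ 1 + |t|)]
    congr 1
    congr 1
    field_simp
  have e2 : ∀ t : ℝ, W q (t - y) ^ ((p+q)/q) = W (p+q) (t - y) := by
    intro t
    rw [W, W, ENNReal.ofReal_rpow_of_nonneg (by positivity) (by positivity),
      ← Real.rpow_mul (by positivity : (0:ℝ) ≤ 1 + |t - y|)]
    congr 1
    congr 1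
    field_simp
  simp only [Pi.mul_apply] at H
  simp only [e1, e2, lintegral_W_shift (p+q) y] at H
  refine H.trans ?_
  set K := ∫⁻ t : ℝ, W (p+q) t with hK
  rw [← ENNReal.rpow_add_of_nonneg _ _ (by positivity) (by positivity), one_div, one_div,
    hconj.inv_add_inv_eq_one, ENNReal.rpow_one]



lemma W_ne_top (r t : ℝ) : W r t ≠ ⊤ := ENNReal.ofReal_ne_top

lemma W_half {γ : ℝ} (hγ : 0 ≤ γ) {u v : ℝ} (h : |v| ≤ 2 * |u|) :
    W γ u ≤ ENNReal.ofReal (2 ^ γ) * W γ v := by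
  rw [W, W, ← ENNReal.ofReal_mul (by positivity)]
  apply ENNReal.ofReal_le_ofReal
  have h2 : (0:ℝ) < 2 ^ γ := Real.rpow_pos_of_pos two_pos γ
  have hv : (1 + |v|) ^ γ ≤ 2 ^ γ * (1 + |u|) ^ γ := by
    rw [← Real.mul_rpow (by norm_num) (by positivity)]
    apply Real.rpow_le_rpow (by positivity) (by linarith [abs_nonneg u]) hγ
  rw [Real.rpow_neg (by positivity), Real.rpow_neg (by positivity)]
  calc ((1 + |u|) ^ γ)⁻¹ = 2 ^ γ * (2 ^ γ * (1 + |u|) ^ γ)⁻¹ := by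
        rw [mul_inv]
        rw [← mul_assoc, mul_inv_cancel₀ h2.ne', one_mul]
    _ ≤ 2 ^ γ * ((1 + |v|) ^ γ)⁻¹ :=
        mul_le_mul_of_nonneg_left (inv_anti₀ (by positivity) hv) h2.le

lemma conv_decay {α β γ : ℝ} (hγ0 : 0 ≤ γ) (hγα : γ < α) (hγβ : γ ≤ β) (hs : γ + 1 < α + β) :
    ∃ C : ℝ≥0∞, C ≠ ⊤ ∧ ∀ y : ℝ, ∫⁻ t : ℝ, W α t * W β (t - y) ≤ C * W γ y := by
  set c := ENNReal.ofReal (2 ^ γ) with hc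
  set K := ∫⁻ t : ℝ, W (α + β - γ) t with hK
  have hKtop : K ≠ ⊤ := (lintegral_W_lt_top (by linarith)).ne
  refine ⟨c * (K + K), by finiteness, fun y => ?_⟩
  have hcW : c * W γ y ≠ ⊤ := ENNReal.mul_ne_top ENNReal.ofReal_ne_top (W_ne_top _ _)
  have key : ∀ t : ℝ, W α t * W β (t - y) ≤
      c * W γ y * (W (α - γ) t * W β (t - y) + W α t * W (β - γ) (t - y)) := by
    intro t
    rcases le_or_gt |y| (2 * |t|) with hcase | hcase
    · have h1 : W γ t ≤ c * W γ y := W_half hγ0 hcase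
      calc W α t * W β (t - y) = W γ t * (W (α - γ) t * W β (t - y)) := by
            rw [← mul_assoc, ← W_add]; ring_nf
          _ ≤ c * W γ y * (W (α - γ) t * W β (t - y)) := by gcongr
          _ ≤ _ := by apply mul_le_mul_right; exact le_self_add
    · have habs : |y| ≤ 2 * |t - y| := by
        rw [abs_sub_comm]
        have := abs_sub_abs_le_abs_sub y t
        linarith [abs_nonneg t, abs_nonneg (y - t)]
      have h1 : W γ (t - y) ≤ c * W γ y := W_half hγ0 habs
      calc W α t * W β (t - y) = W γ (t - y) * (W α t * W (β - γ) (t - y)) := by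
            rw [show β = γ + (β - γ) by ring, W_add]; ring_nf
          _ ≤ c * W γ y * (W α t * W (β - γ) (t - y)) := by gcongr
          _ ≤ _ := by apply mul_le_mul_right; exact le_add_self
  calc ∫⁻ t : ℝ, W α t * W β (t - y)
      ≤ ∫⁻ t : ℝ, c * W γ y * (W (α - γ) t * W β (t - y) + W α t * W (β - γ) (t - y)) :=
        lintegral_mono key
    _ = c * W γ y * ∫⁻ t : ℝ, (W (α - γ) t * W β (t - y) + W α t * W (β - γ) (t - y)) := by
        rw [lintegral_const_mul' _ _ hcW]
    _ ≤ c * W γ y * (K + K) := by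
        apply mul_le_mul_right
        have hmeas : Measurable (fun t : ℝ => W (α - γ) t * W β (t - y)) :=
          (measurable_W _).mul ((measurable_W _).comp (measurable_id.sub_const y))
        rw [lintegral_add_left hmeas]
        apply add_le_add
        · exact (conv_bound (by linarith) (by linarith) y).trans_eq
            (by rw [show α - γ + β = α + β - γ by ring])
        · exact (conv_bound (by linarith) (by linarith) y).trans_eq
            (by rw [show α + (β - γ) = α + β - γ by ring])
    _ = c * (K + K) * W γ y := by ring

noncomputable def CI (a β : ℝ) (n : ℕ) (α : ℝ) : ℝ≥0∞ :=
  ∫⁻ x : Fin (n+1) → ℝ,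
    (W α (x (Fin.last n)) * ∏ j : Fin n, W a (x j.castSucc)) *
      ∏ k : Fin n, W β (x k.succ - x k.castSucc)

lemma CI_zero (α : ℝ) (a β : ℝ) (hα : 1 < α) : CI a β 0 α < ⊤ := by
  rw [CI]
  simp only [Finset.univ_eq_empty, Finset.prod_empty, mul_one]
  have h := (volume_preserving_funUnique (Fin 1) ℝ)
  have : ∫⁻ x : Fin 1 → ℝ, W α (x (Fin.last 0)) = ∫⁻ t : ℝ, W α t := by
    rw [← MeasurePreserving.lintegral_comp h (measurable_W α)]
    rfl
  rw [this]
  exact lintegral_W_lt_top hα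

lemma CI_step {a β γ : ℝ} (hγ0 : 0 ≤ γ) (hγa : γ < a) (hs : γ + 1 < a + β)
    (n : ℕ) {δ : ℝ} (hδ : 0 ≤ δ) (hδβ : δ + γ ≤ β) :
    ∃ C : ℝ≥0∞, C ≠ ⊤ ∧ CI a β (n+1) (a + δ) ≤ C * CI a β n (a + (δ + γ)) := by
  obtain ⟨C, hCtop, hC⟩ := conv_decay (by linarith) (by linarith : δ + γ < a + δ) hδβ
    (by linarith : δ + γ + 1 < (a + δ) + β)
  refine ⟨C, hCtop, ?_⟩
  set G : ℝ × (Fin (n+1) → ℝ) → ℝ≥0∞ := fun p =>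
    (W (a+δ) p.1 * W β (p.1 - p.2 (Fin.last n))) *
      ((∏ j : Fin (n+1), W a (p.2 j)) * ∏ k : Fin n, W β (p.2 k.succ - p.2 k.castSucc))
    with hG
  have hGmeas : Measurable G := by
    apply Measurable.mul
    · refine Measurable.mul (f := fun p : ℝ × (Fin (n+1) → ℝ) => W (a+δ) p.1)
        (g := fun p : ℝ × (Fin (n+1) → ℝ) => W β (p.1 - p.2 (Fin.last n))) ?_ ?_
      · exact (measurable_W _).comp measurable_fst
      · exact (measurable_W _).comp
          (measurable_fst.sub ((measurable_pi_apply (Fin.last n)).comp measurable_snd))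
    · refine Measurable.mul (f := fun p : ℝ × (Fin (n+1) → ℝ) => ∏ j : Fin (n+1), W a (p.2 j))
        (g := fun p : ℝ × (Fin (n+1) → ℝ) => ∏ k : Fin n, W β (p.2 k.succ - p.2 k.castSucc)) ?_ ?_
      · exact Finset.measurable_prod _ (fun j _ =>
          (measurable_W _).comp ((measurable_pi_apply j).comp measurable_snd))
      · exact Finset.measurable_prod _ (fun k _ =>
          (measurable_W _).comp (((measurable_pi_apply k.succ).comp measurable_snd).sub
            ((measurable_pi_apply k.castSucc).comp measurable_snd)))
  have mp := measurePreserving_piFinSuccAbove (fun _ : Fin (n+2) => (volume : Measure ℝ))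
    (Fin.last (n+1))
  have key : CI a β (n+1) (a + δ) = ∫⁻ p, G p
      ∂((volume : Measure ℝ).prod (Measure.pi fun _ : Fin (n+1) => (volume : Measure ℝ))) := by
    rw [CI, ← mp.lintegral_comp hGmeas]
    rw [show (volume : Measure (Fin (n+2) → ℝ)) = Measure.pi fun _ => volume from volume_pi]
    congr 1
    funext x
    have he : (MeasurableEquiv.piFinSuccAbove (fun _ : Fin (n+2) => ℝ) (Fin.last (n+1))) x
        = (x (Fin.last (n+1)), fun j => x ((Fin.last (n+1)).succAbove j)) := rfl
    rw [he]
    simp only [hG, Fin.succAbove_last]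
    rw [Fin.prod_univ_castSucc (fun k : Fin (n+1) => W β (x k.succ - x k.castSucc))]
    simp only [Fin.succ_castSucc, Fin.succ_last]
    ring
  rw [key, lintegral_prod_symm G hGmeas.aemeasurable]
  have inner_bound : ∀ z : Fin (n+1) → ℝ,
      (∫⁻ t : ℝ, G (t, z)) ≤ (C * W (δ + γ) (z (Fin.last n))) *
        ((∏ j : Fin (n+1), W a (z j)) * ∏ k : Fin n, W β (z k.succ - z k.castSucc)) := by
    intro z
    have hR : ((∏ j : Fin (n+1), W a (z j)) * ∏ k : Fin n, W β (z k.succ - z k.castSucc)) ≠ ⊤ :=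
      ENNReal.mul_ne_top
        (ENNReal.prod_ne_top (fun j _ => W_ne_top _ _)) (ENNReal.prod_ne_top (fun k _ => W_ne_top _ _))
    calc (∫⁻ t : ℝ, G (t, z))
        = (∫⁻ t : ℝ, W (a+δ) t * W β (t - z (Fin.last n))) *
          ((∏ j : Fin (n+1), W a (z j)) * ∏ k : Fin n, W β (z k.succ - z k.castSucc)) := by
          rw [← lintegral_mul_const' _ _ hR]
      _ ≤ _ := by gcongr; exact hC (z (Fin.last n))
  calc (∫⁻ z : Fin (n+1) → ℝ, ∫⁻ t : ℝ, G (t, z)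
          ∂(volume : Measure ℝ) ∂(Measure.pi fun _ : Fin (n+1) => (volume : Measure ℝ)))
      ≤ ∫⁻ z : Fin (n+1) → ℝ, (C * W (δ + γ) (z (Fin.last n))) *
          ((∏ j : Fin (n+1), W a (z j)) * ∏ k : Fin n, W β (z k.succ - z k.castSucc))
          ∂(Measure.pi fun _ : Fin (n+1) => (volume : Measure ℝ)) :=
        lintegral_mono inner_bound
    _ = C * CI a β n (a + (δ + γ)) := by
        rw [CI, show (volume : Measure (Fin (n+1) → ℝ)) = Measure.pi fun _ => volume from volume_pi,
          ← lintegral_const_mul' _ _ hCtop]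
        congr 1
        funext z
        rw [Fin.prod_univ_castSucc (fun j : Fin (n+1) => W a (z j)), W_add a (δ + γ)]
        ring

lemma chain_finite {a β γ : ℝ} (hγ0 : 0 ≤ γ) (hγa : γ < a) (hs : γ + 1 < a + β) :
    ∀ n : ℕ, ∀ δ : ℝ, 0 ≤ δ → 1 < a + δ + n * γ → δ + n * γ ≤ β → CI a β n (a + δ) < ⊤ := by
  intro n
  induction n with
  | zero =>
    intro δ hδ h1 _
    exact CI_zero _ _ _ (by push_cast at h1; linarith)
  | succ n ih =>
    intro δ hδ h1 hβ
    have hnγ : 0 ≤ (n:ℝ) * γ := by positivity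
    have hβ' : δ + γ ≤ β := by push_cast at hβ; linarith
    obtain ⟨C, hCtop, hCle⟩ := CI_step hγ0 hγa hs n hδ hβ'
    have hfin := ih (δ + γ) (by linarith) (by push_cast at h1 ⊢; linarith)
      (by push_cast at hβ ⊢; linarith)
    exact lt_of_le_of_lt hCle (ENNReal.mul_lt_top hCtop.lt_top hfin)

lemma chain_pointwise {b : ℝ} (hb : 0 ≤ b) (n : ℕ) (y : Fin (n+1) → ℝ) (hy : Monotone y) :
    ∏ p ∈ Finset.univ.filter (fun p : Fin (n+1) × Fin (n+1) => p.1 < p.2), W b (y p.1 - y p.2)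
      ≤ ∏ k : Fin n, W (((n:ℝ)+1) * b / 2) (y k.succ - y k.castSucc) := by
  match n with
  | 0 =>
    simp only [Finset.univ_eq_empty, Finset.prod_empty]
    exact Finset.prod_le_one (fun p _ => zero_le) (fun p _ => W_le_one hb _)
  | Nat.succ l =>
    set P := Finset.univ.filter (fun p : Fin (l+2) × Fin (l+2) => p.1 < p.2) with hP
    set g : Fin (l+1) → ℝ := fun k => y k.succ - y k.castSucc with hg
    set lo : Fin (l+2) × Fin (l+2) → Fin (l+1) := fun p => ⟨min p.1.val l, by omega⟩ with hlo
    set hi : Fin (l+2) × Fin (l+2) → Fin (l+1) := fun p => ⟨min (p.2.val - 1) l, by omega⟩ with hhi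
    have pair_bd : ∀ p ∈ P, W b (y p.1 - y p.2) ≤ W (b/2) (g (lo p)) * W (b/2) (g (hi p)) := by
      intro p hp
      have hplt : p.1 < p.2 := by simpa [hP] using hp
      have hval : p.1.val < p.2.val := hplt
      have h2 : p.2.val ≤ l + 1 := by omega
      have hlov : (lo p).val = p.1.val := by simp [hlo]; omega
      have hhiv : (hi p).val = p.2.val - 1 := by simp [hhi]; omega
      have hyle : y p.1 ≤ y p.2 := hy hplt.le
      have habs : |y p.1 - y p.2| = y p.2 - y p.1 := by rw [abs_sub_comm, abs_of_nonneg]; linarith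
      have hlo1 : y ((lo p).castSucc) = y p.1 := by
        congr 1
        exact Fin.ext (by rw [Fin.coe_castSucc, hlov])
      have hlo2 : y ((lo p).succ) ≤ y p.2 := hy (by
        rw [Fin.le_def]; simp [hlov]; omega)
      have hlo3 : (0:ℝ) ≤ g (lo p) := by
        rw [hg]; simp only
        have : ((lo p).castSucc) ≤ ((lo p).succ) := (Fin.castSucc_lt_succ).le
        linarith [sub_nonneg.2 (hy this)]
      have hgl : |g (lo p)| ≤ |y p.1 - y p.2| := by
        rw [habs, abs_of_nonneg hlo3, hg]
        simp only
        rw [hlo1]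
        linarith
      have hhi1 : y ((hi p).succ) = y p.2 := by
        congr 1
        exact Fin.ext (by rw [Fin.val_succ, hhiv]; omega)
      have hhi2 : y p.1 ≤ y ((hi p).castSucc) := hy (by
        rw [Fin.le_def]; simp [hhiv]; omega)
      have hhi3 : (0:ℝ) ≤ g (hi p) := by
        rw [hg]; simp only
        linarith [sub_nonneg.2 (hy (Fin.castSucc_lt_succ (i := hi p)).le)]
      have hgh : |g (hi p)| ≤ |y p.1 - y p.2| := by
        rw [habs, abs_of_nonneg hhi3, hg]
        simp only
        rw [hhi1]
        linarith
      calc W b (y p.1 - y p.2) = W (b/2) (y p.1 - y p.2) * W (b/2) (y p.1 - y p.2) := by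
            rw [← W_add]; norm_num
        _ ≤ W (b/2) (g (lo p)) * W (b/2) (g (hi p)) :=
            mul_le_mul' (W_anti (by linarith) hgl) (W_anti (by linarith) hgh)
    have mem_simp : ∀ p : Fin (l+2) × Fin (l+2), ∀ k : Fin (l+1),
        p ∈ P.filter (fun p => lo p = k) → p.1 < p.2 ∧ p.1.val = k.val := by
      intro p k hp
      rw [Finset.mem_filter, hP, Finset.mem_filter] at hp
      obtain ⟨⟨-, hplt⟩, hlop⟩ := hp
      refine ⟨hplt, ?_⟩
      have := congrArg Fin.val hlop
      simp only [hlo] at this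
      have h2 : p.2.val ≤ l + 1 := by omega
      have hval : p.1.val < p.2.val := hplt
      omega
    have mem_simp2 : ∀ p : Fin (l+2) × Fin (l+2), ∀ k : Fin (l+1),
        p ∈ P.filter (fun p => hi p = k) → p.1 < p.2 ∧ p.2.val = k.val + 1 := by
      intro p k hp
      rw [Finset.mem_filter, hP, Finset.mem_filter] at hp
      obtain ⟨⟨-, hplt⟩, hlop⟩ := hp
      refine ⟨hplt, ?_⟩
      have := congrArg Fin.val hlop
      simp only [hhi] at this
      have h2 : p.2.val ≤ l + 1 := by omega
      have hval : p.1.val < p.2.val := hplt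
      omega
    have cardlo : ∀ k : Fin (l+1), (P.filter (fun p => lo p = k)).card = l + 1 - k.val := by
      intro k
      have : (P.filter (fun p => lo p = k)).card = (Finset.Ioi (k.castSucc : Fin (l+2))).card := by
        apply Finset.card_nbij' (fun p => p.2) (fun j => (k.castSucc, j))
        · intro p hp
          obtain ⟨hplt, h1⟩ := mem_simp p k hp
          rw [Finset.mem_coe, Finset.mem_Ioi]
          have : p.1 = k.castSucc := Fin.ext (by simpa using h1)
          rwa [← this]
        · intro j hj
          rw [Finset.mem_coe, Finset.mem_Ioi] at hj
          rw [Finset.mem_coe, Finset.mem_filter, hP, Finset.mem_filter]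
          refine ⟨⟨Finset.mem_univ _, hj⟩, ?_⟩
          apply Fin.ext
          simp only [hlo]
          have := k.isLt
          simp
          omega
        · intro p hp
          obtain ⟨hplt, h1⟩ := mem_simp p k hp
          have : p.1 = k.castSucc := Fin.ext (by simpa using h1)
          exact Prod.ext this.symm rfl
        · intro j hj
          rfl
      rw [this, Fin.card_Ioi]
      simp
    have cardhi : ∀ k : Fin (l+1), (P.filter (fun p => hi p = k)).card = k.val + 1 := by
      intro k
      have : (P.filter (fun p => hi p = k)).card = (Finset.Iio (k.succ : Fin (l+2))).card := by
        apply Finset.card_nbij' (fun p => p.1) (fun j => (j, k.succ))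
        · intro p hp
          obtain ⟨hplt, h1⟩ := mem_simp2 p k hp
          rw [Finset.mem_coe, Finset.mem_Iio]
          have : p.2 = k.succ := Fin.ext (by simpa using h1)
          rwa [← this]
        · intro j hj
          rw [Finset.mem_coe, Finset.mem_Iio] at hj
          rw [Finset.mem_coe, Finset.mem_filter, hP, Finset.mem_filter]
          refine ⟨⟨Finset.mem_univ _, hj⟩, ?_⟩
          apply Fin.ext
          simp only [hhi]
          have := k.isLt
          simp
          omega
        · intro p hp
          obtain ⟨hplt, h1⟩ := mem_simp2 p k hp
          have : p.2 = k.succ := Fin.ext (by simpa using h1)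
          exact Prod.ext rfl this.symm
        · intro j hj
          rfl
      rw [this, Fin.card_Iio]
      simp
    have prodlo : ∏ p ∈ P, W (b/2) (g (lo p)) =
        ∏ k : Fin (l+1), (W (b/2) (g k)) ^ (l + 1 - k.val) := by
      rw [← Finset.prod_fiberwise_of_maps_to (fun p _ => Finset.mem_univ (lo p))
        (fun p => W (b/2) (g (lo p)))]
      apply Finset.prod_congr rfl
      intro k _
      rw [Finset.prod_congr rfl (fun p hp => by rw [(Finset.mem_filter.1 hp).2]),
        Finset.prod_const, cardlo k]
    have prodhi : ∏ p ∈ P, W (b/2) (g (hi p)) =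
        ∏ k : Fin (l+1), (W (b/2) (g k)) ^ (k.val + 1) := by
      rw [← Finset.prod_fiberwise_of_maps_to (fun p _ => Finset.mem_univ (hi p))
        (fun p => W (b/2) (g (hi p)))]
      apply Finset.prod_congr rfl
      intro k _
      rw [Finset.prod_congr rfl (fun p hp => by rw [(Finset.mem_filter.1 hp).2]),
        Finset.prod_const, cardhi k]
    calc ∏ p ∈ P, W b (y p.1 - y p.2)
        ≤ ∏ p ∈ P, (W (b/2) (g (lo p)) * W (b/2) (g (hi p))) := Finset.prod_le_prod' pair_bd
      _ = (∏ p ∈ P, W (b/2) (g (lo p))) * (∏ p ∈ P, W (b/2) (g (hi p))) :=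
          Finset.prod_mul_distrib
      _ = ∏ k : Fin (l+1), (W (b/2) (g k)) ^ (l + 2) := by
          rw [prodlo, prodhi, ← Finset.prod_mul_distrib]
          apply Finset.prod_congr rfl
          intro k _
          rw [← pow_add]
          congr 1
          have := k.isLt
          omega
      _ = ∏ k : Fin (l+1), W (((l:ℝ)+1+1) * b / 2) (g k) := by
          apply Finset.prod_congr rfl
          intro k _
          rw [W_pow]
          congr 1
          push_cast
          ring
      _ = _ := by push_cast; norm_num; rfl

lemma pairprod_perm {M : ℕ} (f : ℝ → ℝ≥0∞) (hf : ∀ u, f (-u) = f u)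
    (x : Fin M → ℝ) (σ : Equiv.Perm (Fin M)) :
    ∏ p ∈ Finset.univ.filter (fun p : Fin M × Fin M => p.1 < p.2), f (x (σ p.1) - x (σ p.2)) =
      ∏ p ∈ Finset.univ.filter (fun p : Fin M × Fin M => p.1 < p.2), f (x p.1 - x p.2) := by
  apply Finset.prod_nbij'
    (i := fun p => if σ p.1 < σ p.2 then (σ p.1, σ p.2) else (σ p.2, σ p.1))
    (j := fun q => if σ.symm q.1 < σ.symm q.2 then (σ.symm q.1, σ.symm q.2)
      else (σ.symm q.2, σ.symm q.1))
  · intro p hp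
    have hlt : p.1 < p.2 := by simpa using hp
    have hne : σ p.1 ≠ σ p.2 := fun h => hlt.ne (σ.injective h)
    rcases lt_or_gt_of_ne hne with h | h
    · simp [h]
    · simp [h, not_lt_of_gt h]
  · intro q hq
    have hlt : q.1 < q.2 := by simpa using hq
    have hne : σ.symm q.1 ≠ σ.symm q.2 := fun h => hlt.ne (σ.symm.injective h)
    rcases lt_or_gt_of_ne hne with h | h
    · simp [h]
    · simp [h, not_lt_of_gt h]
  · intro p hp
    have hlt : p.1 < p.2 := by simpa using hp
    have hne : σ p.1 ≠ σ p.2 := fun h => hlt.ne (σ.injective h)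
    rcases lt_or_gt_of_ne hne with h | h
    · simp [h, hlt]
    · simp [h, not_lt_of_gt h, hlt, hlt.not_gt]
  · intro q hq
    have hlt : q.1 < q.2 := by simpa using hq
    have hne : σ.symm q.1 ≠ σ.symm q.2 := fun h => hlt.ne (σ.symm.injective h)
    rcases lt_or_gt_of_ne hne with h | h
    · simp [h, hlt]
    · simp [h, not_lt_of_gt h, hlt, hlt.not_gt]
  · intro p hp
    rcases le_or_gt (σ p.1) (σ p.2) with h | h
    · have : σ p.1 < σ p.2 := lt_of_le_of_ne h (fun hh => ((by simpa using hp : p.1 < p.2)).ne (σ.injective hh))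
      simp [this]
    · simp only [if_neg (not_lt_of_gt h)]
      rw [← hf]
      ring_nf

lemma W_factor {c : ℝ} (hc : 0 ≤ c) (t : ℝ) :
    ENNReal.ofReal (1 / (1 + |t| ^ c)) ≤ ENNReal.ofReal (2 ^ c) * W c t := by
  rw [W, ← ENNReal.ofReal_mul (by positivity)]
  apply ENNReal.ofReal_le_ofReal
  have hd : (0:ℝ) < 1 + |t| ^ c := by positivity
  have h2 : (0:ℝ) < 2 ^ c := Real.rpow_pos_of_pos two_pos c
  have key : (1 + |t|) ^ c ≤ 2 ^ c * (1 + |t| ^ c) := by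
    rcases le_total |t| 1 with h | h
    · have : (1 + |t|) ^ c ≤ 2 ^ c := Real.rpow_le_rpow (by positivity) (by linarith) hc
      nlinarith [Real.rpow_nonneg (abs_nonneg t) c]
    · have : (1 + |t|) ^ c ≤ (2 * |t|) ^ c := Real.rpow_le_rpow (by positivity) (by linarith) hc
      rw [Real.mul_rpow (by norm_num) (abs_nonneg t)] at this
      nlinarith
  rw [Real.rpow_neg (base_pos t).le, one_div]
  calc (1 + |t| ^ c)⁻¹ = 2 ^ c * (2 ^ c * (1 + |t| ^ c))⁻¹ := by
        rw [mul_inv, ← mul_assoc, mul_inv_cancel₀ h2.ne', one_mul]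
    _ ≤ 2 ^ c * ((1 + |t|) ^ c)⁻¹ :=
        mul_le_mul_of_nonneg_left (inv_anti₀ (by positivity) key) h2.le

lemma gamma_exists {n : ℕ} {a b : ℝ} (ha : 0 ≤ a) (hb : 0 ≤ b)
    (h1 : 1 < a + n * b / 2) (h2 : 1 < ((n:ℝ) + 1) * a) :
    ∃ γ : ℝ, 0 ≤ γ ∧ γ < a ∧ γ + 1 < a + ((n:ℝ)+1) * b / 2 ∧
      1 < a + n * γ ∧ (n:ℝ) * γ ≤ ((n:ℝ)+1) * b / 2 := by
  set β := ((n:ℝ)+1) * b / 2 with hβ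
  have hβ0 : 0 ≤ β := by positivity
  have hn0 : (0:ℝ) ≤ n := Nat.cast_nonneg n
  rcases lt_or_ge 1 a with ha1 | ha1
  · exact ⟨0, le_refl _, by linarith, by linarith, by simpa using ha1, by simpa using hβ0⟩
  · -- a ≤ 1, so n ≥ 1 and b > 0
    have hnb : 1 - a < (n:ℝ) * b / 2 := by linarith
    have hn1 : (1:ℝ) ≤ (n:ℝ) := by
      rcases Nat.eq_zero_or_pos n with h | h
      · subst h; norm_num at hnb; linarith
      · exact_mod_cast h
    have hbpos : 0 < b := by nlinarith
    have hN : (0:ℝ) < n := by linarith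
    set L := (1 - a) / n with hL
    set U := min a (min (β / n) (a + β - 1)) with hU
    have hs : 0 < a + (n:ℝ) * b / 2 - 1 := by linarith
    have hLa : L < a := by rw [hL, div_lt_iff₀ hN]; nlinarith
    have hLβ : L < β / n := by
      rw [hL, div_lt_div_iff₀ hN hN, hβ]; nlinarith
    have hLs : L < a + β - 1 := by
      rw [hL, div_lt_iff₀ hN, hβ]
      nlinarith
    have hLU : L < U := lt_min hLa (lt_min hLβ hLs)
    refine ⟨(L + U) / 2, ?_, ?_, ?_, ?_, ?_⟩
    · have : 0 ≤ L := by rw [hL]; exact div_nonneg (by linarith) hN.le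
      linarith
    · have := min_le_left a (min (β / n) (a + β - 1)); linarith
    · have h' := (min_le_right a _).trans (min_le_right (β / n) (a + β - 1))
      have : U ≤ a + β - 1 := by
        rw [hU]; exact (min_le_right _ _).trans (min_le_right _ _)
      linarith
    · have : L < (L + U) / 2 := by linarith
      rw [hL] at this
      have := (div_lt_iff₀ hN).1 (by linarith [this] : (1 - a)/n < (L+U)/2)
      linarith
    · have hUβ : U ≤ β / n := by
        rw [hU]; exact (min_le_right _ _).trans (min_le_left _ _)
      have : (L + U) / 2 ≤ β / n := by linarith
      rw [div_le_div_iff₀ (by norm_num) hN] at this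
      calc (n:ℝ) * ((L+U)/2) = ((L+U)/2) * n := by ring
        _ ≤ β := by nlinarith [this]


set_option maxHeartbeats 1000000 in
/-- Lemma `IntegralFinite`: for `a + (m-1)b/2 > 1` and `ma > 1`, the integral over `ℝ^m` of
`∏_j 1/(1+|x_j|^a) ∏_{i<j} 1/(1+|x_i-x_j|^b)` is finite. -/
theorem statement8 (m : ℕ) (hm : 1 ≤ m) (a b : ℝ) (ha : 0 ≤ a) (hb : 0 ≤ b)
    (h1 : 1 < a + ((m : ℝ) - 1) * b / 2) (h2 : 1 < (m : ℝ) * a) :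
    ∫⁻ x : Fin m → ℝ, ENNReal.ofReal
        ((∏ j, 1 / (1 + |x j| ^ a)) *
          ∏ p ∈ Finset.univ.filter (fun p : Fin m × Fin m => p.1 < p.2),
            1 / (1 + |x p.1 - x p.2| ^ b)) < ⊤ := by
  obtain ⟨n, rfl⟩ : ∃ n, m = n + 1 := ⟨m - 1, by omega⟩
  have h1' : 1 < a + n * b / 2 := by push_cast at h1; linarith
  have h2' : 1 < ((n:ℝ) + 1) * a := by push_cast at h2; linarith
  obtain ⟨γ, hγ0, hγa, hγs, hγ1, hγβ⟩ := gamma_exists ha hb h1' h2'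
  set β := ((n:ℝ) + 1) * b / 2 with hβdef
  set P := Finset.univ.filter (fun p : Fin (n+1) × Fin (n+1) => p.1 < p.2) with hPdef
  set c1 := ENNReal.ofReal ((2:ℝ) ^ a) with hc1
  set c2 := ENNReal.ofReal ((2:ℝ) ^ b) with hc2
  set D := c1 ^ (n+1) * c2 ^ P.card with hD
  have hDne : D ≠ ⊤ :=
    ENNReal.mul_ne_top (ENNReal.pow_ne_top ENNReal.ofReal_ne_top)
      (ENNReal.pow_ne_top ENNReal.ofReal_ne_top)
  set chainW : Equiv.Perm (Fin (n+1)) → (Fin (n+1) → ℝ) → ℝ≥0∞ := fun σ x =>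
    ∏ k : Fin n, W β (x (σ k.succ) - x (σ k.castSucc)) with hchainW
  -- pointwise step 1
  have pt1 : ∀ x : Fin (n+1) → ℝ, ENNReal.ofReal
      ((∏ j, 1 / (1 + |x j| ^ a)) * ∏ p ∈ P, 1 / (1 + |x p.1 - x p.2| ^ b)) ≤
      D * ((∏ j, W a (x j)) * ∏ p ∈ P, W b (x p.1 - x p.2)) := by
    intro x
    rw [ENNReal.ofReal_mul (Finset.prod_nonneg (fun j _ => by positivity)),
      ENNReal.ofReal_prod_of_nonneg (fun j _ => by positivity),
      ENNReal.ofReal_prod_of_nonneg (fun p _ => by positivity)]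
    calc (∏ j, ENNReal.ofReal (1 / (1 + |x j| ^ a))) *
          ∏ p ∈ P, ENNReal.ofReal (1 / (1 + |x p.1 - x p.2| ^ b))
        ≤ (∏ j, c1 * W a (x j)) * ∏ p ∈ P, c2 * W b (x p.1 - x p.2) := by
          apply mul_le_mul'
          · exact Finset.prod_le_prod' (fun j _ => W_factor ha (x j))
          · exact Finset.prod_le_prod' (fun p _ => W_factor hb _)
      _ = D * ((∏ j, W a (x j)) * ∏ p ∈ P, W b (x p.1 - x p.2)) := by
          rw [Finset.prod_mul_distrib, Finset.prod_mul_distrib, Finset.prod_const,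
            Finset.prod_const, hD, Finset.card_univ, Fintype.card_fin]
          ring
  -- pointwise step 2
  have pt2 : ∀ x : Fin (n+1) → ℝ, (∏ p ∈ P, W b (x p.1 - x p.2)) ≤
      ∑ σ : Equiv.Perm (Fin (n+1)), chainW σ x := by
    intro x
    set σ := Tuple.sort x with hσ
    have hmono : Monotone (x ∘ σ) := Tuple.monotone_sort x
    calc ∏ p ∈ P, W b (x p.1 - x p.2)
        = ∏ p ∈ P, W b (x (σ p.1) - x (σ p.2)) := (pairprod_perm (W b) (W_neg b) x σ).symm
      _ ≤ ∏ k : Fin n, W β ((x ∘ σ) k.succ - (x ∘ σ) k.castSucc) :=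
          chain_pointwise hb n (x ∘ σ) hmono
      _ = chainW σ x := rfl
      _ ≤ _ := Finset.single_le_sum (f := fun τ => chainW τ x) (fun τ _ => zero_le)
          (Finset.mem_univ σ)
  -- measurable F
  set F : (Fin (n+1) → ℝ) → ℝ≥0∞ := fun z =>
    (∏ j, W a (z j)) * ∏ k : Fin n, W β (z k.succ - z k.castSucc) with hF
  have hFmeas : Measurable F := by
    apply Measurable.mul
    · exact Finset.measurable_prod _ (fun j _ => (measurable_W a).comp (measurable_pi_apply j))
    · exact Finset.measurable_prod _ (fun k _ => (measurable_W β).comp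
        ((measurable_pi_apply k.succ).sub (measurable_pi_apply k.castSucc)))
  have hterm_meas : ∀ σ : Equiv.Perm (Fin (n+1)),
      Measurable (fun x : Fin (n+1) → ℝ => (∏ j, W a (x j)) * chainW σ x) := by
    intro σ
    apply Measurable.mul
    · exact Finset.measurable_prod _ (fun j _ => (measurable_W a).comp (measurable_pi_apply j))
    · exact Finset.measurable_prod _ (fun k _ => (measurable_W β).comp
        ((measurable_pi_apply (σ k.succ)).sub (measurable_pi_apply (σ k.castSucc))))
  -- change of variables for each permutation
  have hperm : ∀ σ : Equiv.Perm (Fin (n+1)),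
      ∫⁻ x : Fin (n+1) → ℝ, (∏ j, W a (x j)) * chainW σ x = ∫⁻ z : Fin (n+1) → ℝ, F z := by
    intro σ
    have mp := volume_measurePreserving_piCongrLeft (fun _ : Fin (n+1) => ℝ) σ.symm
    rw [← mp.lintegral_comp hFmeas]
    congr 1
    funext x
    have hT : ∀ i, (MeasurableEquiv.piCongrLeft (fun _ : Fin (n+1) => ℝ) σ.symm) x i
        = x (σ i) := by
      intro i
      have := MeasurableEquiv.piCongrLeft_apply_apply (σ.symm) (β := fun _ : Fin (n+1) => ℝ)
        x (σ i)
      simpa using this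
    simp only [hF, hT]
    rw [Equiv.prod_comp σ (fun j => W a (x j))]
  -- final computation
  have hCI : CI a β n a < ⊤ := by
    have := chain_finite hγ0 hγa hγs n 0 (le_refl 0) (by push_cast; linarith) (by push_cast; linarith)
    simpa using this
  have hFint : ∫⁻ z : Fin (n+1) → ℝ, F z < ⊤ := by
    refine lt_of_le_of_lt (le_of_eq ?_) hCI
    rw [CI]
    congr 1
    funext z
    rw [hF]
    simp only
    rw [Fin.prod_univ_castSucc (fun j : Fin (n+1) => W a (z j))]
    ring
  calc ∫⁻ x : Fin (n+1) → ℝ, ENNReal.ofReal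
        ((∏ j, 1 / (1 + |x j| ^ a)) * ∏ p ∈ P, 1 / (1 + |x p.1 - x p.2| ^ b))
      ≤ ∫⁻ x : Fin (n+1) → ℝ, D * ((∏ j, W a (x j)) *
          ∑ σ : Equiv.Perm (Fin (n+1)), chainW σ x) := by
        apply lintegral_mono
        intro x
        exact (pt1 x).trans (mul_le_mul_right (mul_le_mul_right (pt2 x) _) _)
    _ = D * ∑ σ : Equiv.Perm (Fin (n+1)), ∫⁻ x, (∏ j, W a (x j)) * chainW σ x := by
        rw [lintegral_const_mul' _ _ hDne]
        congr 1
        rw [← lintegral_finset_sum _ (fun σ _ => hterm_meas σ)]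
        congr 1
        funext x
        rw [Finset.mul_sum]
    _ = D * ∑ σ : Equiv.Perm (Fin (n+1)), ∫⁻ z, F z := by
        congr 1
        exact Finset.sum_congr rfl (fun σ _ => hperm σ)
    _ < ⊤ := by
        apply ENNReal.mul_lt_top hDne.lt_top
        exact ENNReal.sum_lt_top.2 (fun σ _ => hFint)
end

section
/- Let β > 0 and t ≥ 0. There exists a constant C > 0, depending only on β and t, such that for every integer N ≥ 1 and all x, y ∈ ℝ with |x − y| ≤ πN: N^{−t/β} · min( N, |e^{ix/N} − e^{iy/N}|^{−1} )^{t/β} ≤ C / (1 + |x − y|^{t/β}) (with the convention that the minimum equals N when e^{ix/N} = e^{iy/N}). -/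
open Real

lemma abs_exp_I_sub (u v : ℝ) :
    ‖Complex.exp ((u : ℂ) * Complex.I) - Complex.exp ((v : ℂ) * Complex.I)‖
      = 2 * |Real.sin ((u - v) / 2)| := by
  rw [Real.abs_sin_half, Complex.norm_def]
  have h1 : Complex.exp ((u : ℂ) * Complex.I) - Complex.exp ((v : ℂ) * Complex.I)
      = Complex.mk (Real.cos u - Real.cos v) (Real.sin u - Real.sin v) := by
    apply Complex.ext <;>
    simp [Complex.exp_mul_I, Complex.cos_ofReal_re, Complex.sin_ofReal_re, Complex.ext_iff]
  rw [h1]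
  have h2 : Complex.normSq (Complex.mk (Real.cos u - Real.cos v) (Real.sin u - Real.sin v))
      = 4 * ((1 - Real.cos (u - v)) / 2) := by
    rw [Complex.normSq_mk, Real.cos_sub]
    nlinarith [Real.sin_sq_add_cos_sq u, Real.sin_sq_add_cos_sq v]
  rw [h2]
  rw [show (4 : ℝ) * ((1 - Real.cos (u - v)) / 2) = 2 ^ 2 * ((1 - Real.cos (u - v)) / 2) by ring,
    Real.sqrt_mul (by positivity), Real.sqrt_sq (by norm_num)]

set_option maxHeartbeats 1000000 in
/-- Elementary inequality: `N^{-t/β} min(N, |e^{ix/N} - e^{iy/N}|⁻¹)^{t/β} ≤ C/(1 + |x-y|^{t/β})`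
for `|x - y| ≤ πN`, with `C` depending only on `β` and `t`; by convention the minimum is `N`
when `e^{ix/N} = e^{iy/N}`. -/
theorem statement13 (β t : ℝ) (hβ : 0 < β) (ht : 0 ≤ t) :
    ∃ C > 0, ∀ N : ℕ, 1 ≤ N → ∀ x y : ℝ, |x - y| ≤ π * N →
      (N : ℝ) ^ (-(t / β)) *
        (if Complex.exp ((↑(x / N) : ℂ) * Complex.I) = Complex.exp ((↑(y / N) : ℂ) * Complex.I)
          then (N : ℝ)
          else min (N : ℝ)
            ‖Complex.exp ((↑(x / N) : ℂ) * Complex.I)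
              - Complex.exp ((↑(y / N) : ℂ) * Complex.I)‖⁻¹) ^ (t / β)
      ≤ C / (1 + |x - y| ^ (t / β)) := by
  set s : ℝ := t / β with hs_def
  have hs : 0 ≤ s := div_nonneg ht hβ.le
  have hπ1 : (1 : ℝ) ≤ π := by linarith [Real.pi_gt_three]
  have hπs1 : (1 : ℝ) ≤ π ^ s := Real.one_le_rpow hπ1 hs
  refine ⟨2 * (1 + π ^ s), by positivity, ?_⟩
  intro N hN x y hxy
  have hNpos : (0 : ℝ) < N := by exact_mod_cast Nat.pos_of_ne_zero (by omega)
  set d : ℝ := |x - y| with hd_def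
  have hd0 : 0 ≤ d := abs_nonneg _
  by_cases hxyeq : x = y
  · subst hxyeq
    rw [if_pos rfl]
    have hL : (N : ℝ) ^ (-s) * (N : ℝ) ^ s = 1 := by
      rw [← Real.rpow_add hNpos]; simp
    rw [hL]
    have hdd : d = 0 := by simp [hd_def]
    rw [hdd]
    have h0s : (0 : ℝ) ^ s ≤ 1 := by
      rcases eq_or_lt_of_le hs with h | h
      · rw [← h, Real.rpow_zero]
      · rw [Real.zero_rpow h.ne']; norm_num
    rw [le_div_iff₀ (by positivity)]
    nlinarith
  · -- x ≠ y, so d > 0 and the exponentials differ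
    have hdpos : 0 < d := abs_pos.2 (sub_ne_zero.2 hxyeq)
    have hne : Complex.exp ((↑(x / N) : ℂ) * Complex.I)
        ≠ Complex.exp ((↑(y / N) : ℂ) * Complex.I) := by
      intro h
      rw [Complex.exp_eq_exp_iff_exists_int] at h
      obtain ⟨n, hn⟩ := h
      have hI : ((x / N : ℝ) : ℂ) = ((y / N : ℝ) : ℂ) + n * (2 * π) := by
        rw [show ((n : ℂ) * (2 * ↑π * Complex.I)) = ((n : ℂ) * (2 * π)) * Complex.I by ring]
          at hn
        have h2 : ((x / N : ℝ) : ℂ) * Complex.I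
            = (((y / N : ℝ) : ℂ) + n * (2 * π)) * Complex.I := by
          rw [hn]; ring
        exact mul_right_cancel₀ Complex.I_ne_zero h2
      have hIr : (x / N : ℝ) = y / N + n * (2 * π) := by exact_mod_cast hI
      have hsub : x - y = n * (2 * π) * N := by
        field_simp at hIr
        nlinarith [hIr]
      have habs : d = |(n : ℝ)| * (2 * π) * N := by
        rw [hd_def, hsub, abs_mul, abs_mul, abs_of_pos Real.two_pi_pos, abs_of_pos hNpos]
      have hn0 : n = 0 := by
        by_contra hn0
        have h1le : (1 : ℝ) ≤ |(n : ℝ)| := by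
          have h1 : (1 : ℤ) ≤ |n| := Int.one_le_abs (by exact_mod_cast hn0)
          calc (1:ℝ) = ((1:ℤ):ℝ) := by norm_num
            _ ≤ ((|n|:ℤ):ℝ) := by exact_mod_cast h1
            _ = |(n:ℝ)| := by push_cast; simp
        have hge : 2 * π * N ≤ d := by
          calc 2 * π * N = 1 * (2 * π) * N := by ring
            _ ≤ |(n : ℝ)| * (2 * π) * N := by
                apply mul_le_mul_of_nonneg_right _ hNpos.le
                exact mul_le_mul_of_nonneg_right h1le Real.two_pi_pos.le
            _ = d := habs.symm
        nlinarith [Real.pi_pos]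
      rw [hn0] at hsub
      simp at hsub
      exact hxyeq (by linarith)
    rw [if_neg hne]
    set A := ‖Complex.exp ((↑(x / N) : ℂ) * Complex.I)
        - Complex.exp ((↑(y / N) : ℂ) * Complex.I)‖ with hA_def
    have habs : A = 2 * |Real.sin ((x / N - y / N) / 2)| := abs_exp_I_sub _ _
    have hθ : (x / N - y / N) / 2 = (x - y) / (2 * N) := by
      rw [show x / (N:ℝ) - y / (N:ℝ) = (x - y) / (N:ℝ) by ring, div_div, mul_comm]
    have hθabs : |(x - y) / (2 * N)| = d / (2 * N) := by
      rw [abs_div, abs_of_pos (show (0:ℝ) < 2 * (N:ℝ) by positivity)]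
    have hθle : d / (2 * N) ≤ π / 2 := by
      rw [div_le_div_iff₀ (by positivity) (by norm_num)]
      nlinarith
    have hsinlb : 2 / π * (d / (2 * N)) ≤ |Real.sin ((x - y) / (2 * N))| := by
      rcases abs_cases ((x - y) / (2 * N)) with ⟨h1, h2⟩ | ⟨h1, h2⟩
      · calc 2 / π * (d / (2 * N)) = 2 / π * ((x - y) / (2 * N)) := by rw [← hθabs, h1]
          _ ≤ Real.sin ((x - y) / (2 * N)) :=
              Real.mul_le_sin h2 (by rw [← h1, hθabs]; exact hθle)
          _ ≤ |Real.sin ((x - y) / (2 * N))| := le_abs_self _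
      · calc 2 / π * (d / (2 * N)) = 2 / π * (-((x - y) / (2 * N))) := by rw [← hθabs, h1]
          _ ≤ Real.sin (-((x - y) / (2 * N))) := by
              apply Real.mul_le_sin (by rw [← h1, hθabs]; positivity)
              rw [← h1, hθabs]; exact hθle
          _ = -Real.sin ((x - y) / (2 * N)) := Real.sin_neg _
          _ ≤ |Real.sin ((x - y) / (2 * N))| := neg_le_abs _
    have hAlb : 2 / π * (d / N) ≤ A := by
      rw [habs, hθ]
      have : 2 / π * (d / N) = 2 * (2 / π * (d / (2 * N))) := by field_simp
      rw [this]; linarith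
    have hApos : 0 < A := lt_of_lt_of_le (by positivity) hAlb
    have hAinv : A⁻¹ ≤ (N : ℝ) * (π / (2 * d)) := by
      rw [inv_le_comm₀ hApos (by positivity)]
      calc ((N : ℝ) * (π / (2 * d)))⁻¹ = 2 / π * (d / N) := by
            rw [← one_div]; field_simp
        _ ≤ A := hAlb
    set m : ℝ := min 1 (π / (2 * d)) with hm_def
    have hm0 : 0 ≤ m := le_min (by norm_num) (by positivity)
    have hm1 : m ≤ 1 := min_le_left _ _
    have hminle : min (N : ℝ) A⁻¹ ≤ (N : ℝ) * m := by
      rw [hm_def, mul_min_of_nonneg _ _ hNpos.le, mul_one]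
      exact le_min (min_le_left _ _) (le_trans (min_le_right _ _) hAinv)
    have hminnn : 0 ≤ min (N : ℝ) A⁻¹ := le_min hNpos.le (inv_nonneg.2 hApos.le)
    have hLHS : (N : ℝ) ^ (-s) * (min (N : ℝ) A⁻¹) ^ s ≤ m ^ s := by
      calc (N : ℝ) ^ (-s) * (min (N : ℝ) A⁻¹) ^ s
          ≤ (N : ℝ) ^ (-s) * ((N : ℝ) * m) ^ s := by
            apply mul_le_mul_of_nonneg_left
              (Real.rpow_le_rpow hminnn hminle hs) (Real.rpow_nonneg hNpos.le _)
        _ = (N : ℝ) ^ (-s) * ((N : ℝ) ^ s * m ^ s) := by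
            rw [Real.mul_rpow hNpos.le hm0]
        _ = m ^ s := by
            rw [← mul_assoc, ← Real.rpow_add hNpos]; simp
    refine hLHS.trans ?_
    have hds0 : (0 : ℝ) ≤ d ^ s := Real.rpow_nonneg hd0 _
    rcases le_total d π with hdπ | hdπ
    · have h1 : m ^ s ≤ 1 := Real.rpow_le_one hm0 hm1 hs
      have h2 : d ^ s ≤ π ^ s := Real.rpow_le_rpow hd0 hdπ hs
      rw [le_div_iff₀ (by positivity)]
      nlinarith
    · have hmle : m ≤ π / d := by
        refine le_trans (min_le_right _ _) ?_
        rw [div_le_div_iff₀ (by positivity) hdpos]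
        nlinarith [Real.pi_pos]
      have h1 : m ^ s ≤ (π / d) ^ s := Real.rpow_le_rpow hm0 hmle hs
      have h2 : (π / d) ^ s = π ^ s / d ^ s := Real.div_rpow Real.pi_pos.le hd0 s
      have h3 : π ^ s ≤ d ^ s := Real.rpow_le_rpow Real.pi_pos.le hdπ hs
      have hdspos : 0 < d ^ s := lt_of_lt_of_le (by linarith) h3
      rw [h2] at h1
      refine h1.trans ?_
      rw [div_le_div_iff₀ hdspos (by positivity)]
      nlinarith
end

section
/- Let β > 0, let p ≥ 1 be an integer, and let n be a positive real number with n ≥ (2/β)(4p + 2). Let X be a real random variable with density x ↦ (β/2)·n·(1 − x)^{(β/2)n − 1} on [0,1]. Then Σ_{k=2}^∞ (k+1)^{2p} E[X^k] ≤ 288 (2p)! / (β² n²). -/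
open MeasureTheory ProbabilityTheory Set
open scoped ENNReal NNReal

lemma aux_rpow_succ {b : ℝ} (hb : 0 ≤ b) {s : ℝ} (hs : s ≠ 0) :
    b ^ s = b ^ (s - 1) * b := by
  rcases eq_or_lt_of_le hb with h | h
  · rw [← h, Real.zero_rpow hs, mul_zero]
  · rw [← Real.rpow_add_one h.ne' (s-1), sub_add_cancel]

lemma aux_base {s : ℝ} (hs : 0 < s) :
    ∫ x in (0:ℝ)..1, (1 - x) ^ (s - 1) = 1 / s := by
  have h := intervalIntegral.integral_comp_sub_left (a := (0:ℝ)) (b := 1)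
    (fun x : ℝ => x ^ (s - 1)) 1
  simp only [sub_zero, sub_self] at h
  rw [h, integral_rpow (Or.inl (by linarith))]
  rw [sub_add_cancel, Real.one_rpow, Real.zero_rpow hs.ne']
  ring

lemma aux_step {s : ℝ} (hs : 1 ≤ s) (r : ℕ) :
    ∫ x in (0:ℝ)..1, x ^ (r + 1) * (1 - x) ^ (s - 1)
      = ((r + 1 : ℝ) / (s + (r + 1))) * ∫ x in (0:ℝ)..1, x ^ r * (1 - x) ^ (s - 1) := by
  have hs0 : (0:ℝ) < s := by linarith
  have hcont1 : ContinuousOn (fun x : ℝ => (1 - x) ^ (s - 1)) (Set.uIcc (0:ℝ) 1) :=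
    ((continuous_const.sub continuous_id).continuousOn).rpow_const
      (fun x _ => Or.inr (by linarith))
  have hcont2 : ContinuousOn (fun x : ℝ => (1 - x) ^ s) (Set.uIcc (0:ℝ) 1) :=
    ((continuous_const.sub continuous_id).continuousOn).rpow_const
      (fun x _ => Or.inr (by linarith))
  have hder1 : ∀ x ∈ Set.uIcc (0:ℝ) 1,
      HasDerivAt (fun x : ℝ => x ^ (r + 1)) (((r:ℝ) + 1) * x ^ r) x := by
    intro x _
    have := hasDerivAt_pow (r + 1) x
    simpa using this
  have hder2 : ∀ x ∈ Set.uIcc (0:ℝ) 1,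
      HasDerivAt (fun x : ℝ => -((1 - x) ^ s / s)) ((1 - x) ^ (s - 1)) x := by
    intro x _
    have hd : HasDerivAt (fun y : ℝ => 1 - y) (-1) x := (hasDerivAt_id x).const_sub 1
    have h2 := (hd.rpow_const (Or.inr hs)).div_const s
    have h3 := h2.neg
    have he : (-1 : ℝ) * s * (1 - x) ^ (s - 1) / s = -((1 - x) ^ (s - 1)) := by
      field_simp
    rw [he, neg_neg] at h3
    exact h3
  have hint1 : IntervalIntegrable (fun x : ℝ => ((r:ℝ) + 1) * x ^ r) volume 0 1 :=
    (continuous_const.mul (continuous_pow r)).intervalIntegrable 0 1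
  have hint2 : IntervalIntegrable (fun x : ℝ => (1 - x) ^ (s - 1)) volume 0 1 :=
    hcont1.intervalIntegrable
  have ibp := intervalIntegral.integral_mul_deriv_eq_deriv_mul hder1 hder2 hint1 hint2
  -- compute boundary terms
  have hb1 : (1:ℝ) ^ (r + 1) * (-((1 - (1:ℝ)) ^ s / s)) = 0 := by
    rw [sub_self, Real.zero_rpow hs0.ne']
    simp
  have hb0 : (0:ℝ) ^ (r + 1) * (-((1 - (0:ℝ)) ^ s / s)) = 0 := by
    rw [zero_pow (Nat.succ_ne_zero r)]
    simp
  rw [hb1, hb0] at ibp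
  -- the remaining integral
  have hsplit : ∫ x in (0:ℝ)..1, (((r:ℝ) + 1) * x ^ r) * (-((1 - x) ^ s / s))
      = (-((r:ℝ)+1)/s) * ∫ x in (0:ℝ)..1, x ^ r * (1 - x) ^ s := by
    rw [← intervalIntegral.integral_const_mul]
    apply intervalIntegral.integral_congr
    intro x _
    field_simp
  have hsub : ∫ x in (0:ℝ)..1, x ^ r * (1 - x) ^ s
      = (∫ x in (0:ℝ)..1, x ^ r * (1 - x) ^ (s - 1))
        - ∫ x in (0:ℝ)..1, x ^ (r + 1) * (1 - x) ^ (s - 1) := by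
    rw [← intervalIntegral.integral_sub (f := fun x => x ^ r * (1 - x) ^ (s - 1))
      (g := fun x => x ^ (r + 1) * (1 - x) ^ (s - 1))
      ((continuous_pow r).continuousOn.mul hcont1).intervalIntegrable
      ((continuous_pow (r+1)).continuousOn.mul hcont1).intervalIntegrable]
    apply intervalIntegral.integral_congr
    intro x hx
    rw [Set.uIcc_of_le (by norm_num : (0:ℝ) ≤ 1)] at hx
    have h1x : 0 ≤ 1 - x := by linarith [hx.2]
    dsimp only
    rw [aux_rpow_succ h1x hs0.ne']
    ring
  rw [hsplit, hsub] at ibp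
  set I1 := ∫ x in (0:ℝ)..1, x ^ (r + 1) * (1 - x) ^ (s - 1) with hI1
  set I0 := ∫ x in (0:ℝ)..1, x ^ r * (1 - x) ^ (s - 1) with hI0
  have hden : s + ((r:ℝ) + 1) ≠ 0 := by positivity
  field_simp at ibp ⊢
  linarith [ibp]
open scoped ENNReal NNReal

lemma aux_moment {Ω : Type*} [MeasureSpace Ω] [IsProbabilityMeasure (ℙ : Measure Ω)]
    (X : Ω → ℝ) (hX : Measurable X) (A : ℝ) (hA : 1 ≤ A)
    (hlaw : Measure.map X ℙ = (volume.restrict (Set.Icc (0 : ℝ) 1)).withDensity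
        (fun x => ENNReal.ofReal (A * (1 - x) ^ (A - 1)))) (m : ℕ) :
    ∫ ω, X ω ^ m ∂ℙ = A * ∫ x in (0:ℝ)..1, x ^ m * (1 - x) ^ (A - 1) := by
  have h1 : ∫ ω, X ω ^ m ∂ℙ = ∫ x, x ^ m ∂(Measure.map X ℙ) :=
    (integral_map hX.aemeasurable (continuous_pow m).aestronglyMeasurable).symm
  rw [h1, hlaw]
  have hgc : ContinuousOn (fun x : ℝ => A * (1 - x) ^ (A - 1)) (Icc (0:ℝ) 1) :=
    continuousOn_const.mul
      (((continuous_const.sub continuous_id).continuousOn).rpow_const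
        (fun x _ => Or.inr (by linarith)))
  have hg : AEMeasurable (fun x : ℝ => (A * (1 - x) ^ (A - 1)).toNNReal)
      (volume.restrict (Icc (0:ℝ) 1)) :=
    (continuous_real_toNNReal.comp_continuousOn hgc).aemeasurable measurableSet_Icc
  have h2 := integral_withDensity_eq_integral_smul₀ hg (fun x : ℝ => x ^ m)
  have h3 : ((volume.restrict (Set.Icc (0 : ℝ) 1)).withDensity
        (fun x => ENNReal.ofReal (A * (1 - x) ^ (A - 1))))
      = ((volume.restrict (Set.Icc (0 : ℝ) 1)).withDensity
        (fun x => ((A * (1 - x) ^ (A - 1)).toNNReal : ℝ≥0∞))) := rfl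
  rw [h3, h2]
  have h4 : ∫ x in Icc (0:ℝ) 1, (A * (1 - x) ^ (A - 1)).toNNReal • x ^ m
      = ∫ x in Icc (0:ℝ) 1, A * (x ^ m * (1 - x) ^ (A - 1)) := by
    apply setIntegral_congr_fun measurableSet_Icc
    intro x hx
    have h1x : (0:ℝ) ≤ 1 - x := by linarith [hx.2]
    have hnn : 0 ≤ A * (1 - x) ^ (A - 1) :=
      mul_nonneg (by linarith) (Real.rpow_nonneg h1x _)
    dsimp only
    rw [NNReal.smul_def, Real.coe_toNNReal _ hnn, smul_eq_mul]
    ring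
  rw [h4, integral_const_mul]
  congr 1
  rw [integral_Icc_eq_integral_Ioc, intervalIntegral.integral_of_le zero_le_one]

noncomputable def auxNp (A Q j : ℝ) : ℝ :=
  (A-Q)*(A-Q+1)*j^3 + (A^3+(6-2*Q)*A^2+(Q^2-9*Q+5)*A+3*Q*(Q-1))*j^2
    + (3*A^3+(11-4*Q)*A^2+(Q^2-9*Q+8)*A+2*Q*(Q-1))*j + 2*A*(A+1)*(A+2)

lemma auxNp_identity (A Q j : ℝ) :
    auxNp A Q j * (A+j+3) - auxNp A Q (j+1) * (j+Q+1)
      = ((A-Q-1)*(A-Q)*(A-Q+1))*(j+1)*(j+2)*(A+j+3) := by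
  unfold auxNp; ring

lemma auxNp_nonneg {A Q j : ℝ} (hQ : 2 ≤ Q) (hA : 2*Q+2 ≤ A) (hj : 0 ≤ j) :
    0 ≤ auxNp A Q j := by
  have hA6 : (6:ℝ) ≤ A := by linarith
  have hAQ : 0 ≤ A - 2*Q - 2 := by linarith
  have hc3 : 0 ≤ (A-Q)*(A-Q+1) := by nlinarith
  have hc2 : 0 ≤ A^3+(6-2*Q)*A^2+(Q^2-9*Q+5)*A+3*Q*(Q-1) := by
    nlinarith [mul_nonneg (sq_nonneg A) hAQ, sq_nonneg (Q-2), mul_nonneg hAQ hAQ,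
      mul_nonneg (mul_nonneg hAQ hAQ) hAQ, sq_nonneg (A - 3*Q), sq_nonneg Q]
  have hc1 : 0 ≤ 3*A^3+(11-4*Q)*A^2+(Q^2-9*Q+8)*A+2*Q*(Q-1) := by
    nlinarith [mul_nonneg (sq_nonneg A) hAQ, sq_nonneg (Q-2), mul_nonneg hAQ hAQ,
      sq_nonneg (A - 3*Q), sq_nonneg Q]
  have hc0 : 0 ≤ 2*A*(A+1)*(A+2) := by nlinarith
  unfold auxNp
  have h1 : 0 ≤ j^2 := sq_nonneg j
  have h2 : 0 ≤ j^3 := by positivity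
  nlinarith [mul_nonneg hc3 h2, mul_nonneg hc2 h1, mul_nonneg hc1 hj]

lemma aux_telescope (w g : ℕ → ℝ) (hk : ∀ k, w k = g k - g (k+1)) :
    ∀ N, ∑ k ∈ Finset.range N, w k = g 0 - g N := by
  intro N
  induction N with
  | zero => simp
  | succ N ih => rw [Finset.sum_range_succ, ih, hk N]; ring

noncomputable def auxFall (q k : ℕ) : ℝ := ∏ i ∈ Finset.range q, ((k:ℝ) + (i:ℝ) + 1)

lemma auxFall_pos (q k : ℕ) : 0 < auxFall q k :=
  Finset.prod_pos (fun i _ => by positivity)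

lemma auxFall_zero (q : ℕ) : auxFall q 0 = (Nat.factorial q : ℝ) := by
  unfold auxFall
  have h : ∀ i ∈ Finset.range q, ((0:ℕ):ℝ) + (i:ℝ) + 1 = ((i+1 : ℕ) : ℝ) := by
    intro i _; push_cast; ring
  rw [Finset.prod_congr rfl h, ← Nat.cast_prod, Finset.prod_range_add_one_eq_factorial]

lemma auxFall_rec (q k : ℕ) :
    auxFall q (k+1) * ((k:ℝ)+1) = auxFall q k * ((k:ℝ) + (q:ℝ) + 1) := by
  have h1 : (∏ i ∈ Finset.range (q+1), ((k:ℝ) + (i:ℝ) + 1))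
      = auxFall q k * ((k:ℝ) + (q:ℝ) + 1) := by
    rw [Finset.prod_range_succ]; rfl
  have h2 : (∏ i ∈ Finset.range (q+1), ((k:ℝ) + (i:ℝ) + 1))
      = auxFall q (k+1) * ((k:ℝ)+1) := by
    rw [Finset.prod_range_succ']
    congr 1
    · unfold auxFall
      apply Finset.prod_congr rfl
      intro i _; push_cast; ring
    · norm_num
  rw [← h2, h1]

lemma aux_core (A : ℝ) (q : ℕ) (M : ℕ → ℝ) (hQ : 2 ≤ (q:ℝ)) (hA : 2*(q:ℝ)+2 ≤ A)
    (hMpos : ∀ m, 0 < M m)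
    (hM2 : M 2 = 2/((A+1)*(A+2)))
    (hMrec : ∀ k : ℕ, M (k+3) * (A + (k:ℝ) + 3) = ((k:ℝ)+3) * M (k+2)) :
    ∀ N, ∑ k ∈ Finset.range N, auxFall q k * M (k+2)
      ≤ 2 * A * (Nat.factorial q : ℝ) / ((A-(q:ℝ)-1)*(A-(q:ℝ))*(A-(q:ℝ)+1)) := by
  set Q : ℝ := (q:ℝ) with hQdef
  have hA0 : (0:ℝ) < A := by linarith
  have hd1 : (0:ℝ) < A - Q - 1 := by linarith
  have hd2 : (0:ℝ) < A - Q := by linarith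
  have hd3 : (0:ℝ) < A - Q + 1 := by linarith
  have hDpos : (0:ℝ) < (A-Q-1)*(A-Q)*(A-Q+1) := mul_pos (mul_pos hd1 hd2) hd3
  set w : ℕ → ℝ := fun k => auxFall q k * M (k+2) with hwdef
  have hwpos : ∀ k, 0 < w k := fun k => mul_pos (auxFall_pos q k) (hMpos (k+2))
  set g : ℕ → ℝ := fun k =>
    auxNp A Q (k:ℝ) * w k / (((A-Q-1)*(A-Q)*(A-Q+1)) * ((k:ℝ)+1) * ((k:ℝ)+2)) with hgdef
  have hgnn : ∀ k, 0 ≤ g k := by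
    intro k
    simp only [hgdef]
    apply div_nonneg
    · exact mul_nonneg (auxNp_nonneg hQ hA (Nat.cast_nonneg k)) (hwpos k).le
    · positivity
  have hw : ∀ k : ℕ, w (k+1) * (((k:ℝ)+1) * (A + (k:ℝ)+3))
      = w k * (((k:ℝ)+Q+1) * ((k:ℝ)+3)) := by
    intro k
    have h1 := auxFall_rec q k
    have h2 := hMrec k
    simp only [hwdef]
    linear_combination (M (k+3) * (A+(k:ℝ)+3)) * h1 + (auxFall q k * ((k:ℝ)+Q+1)) * h2
  have hkey : ∀ k, w k = g k - g (k+1) := by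
    intro k
    have hj1 : (0:ℝ) < (k:ℝ) + 1 := by positivity
    have hj2 : (0:ℝ) < (k:ℝ) + 2 := by positivity
    have hj3 : (0:ℝ) < (k:ℝ) + 3 := by positivity
    have hAj : (0:ℝ) < A + (k:ℝ) + 3 := by positivity
    have hcast : ((k+1 : ℕ) : ℝ) = (k:ℝ) + 1 := by push_cast; ring
    have e1 : g k * ((((A-Q-1)*(A-Q)*(A-Q+1)) * ((k:ℝ)+1) * ((k:ℝ)+2)) * (((k:ℝ)+3)*(A+(k:ℝ)+3)))
        = auxNp A Q (k:ℝ) * w k * (((k:ℝ)+3)*(A+(k:ℝ)+3)) := by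
      simp only [hgdef]
      rw [div_mul_eq_mul_div, div_eq_iff (by positivity)]
      ring
    have e2 : g (k+1) * ((((A-Q-1)*(A-Q)*(A-Q+1)) * ((k:ℝ)+1) * ((k:ℝ)+2)) * (((k:ℝ)+3)*(A+(k:ℝ)+3)))
        = auxNp A Q ((k:ℝ)+1) * w (k+1) * (((k:ℝ)+1)*(A+(k:ℝ)+3)) := by
      simp only [hgdef, hcast]
      rw [div_mul_eq_mul_div, div_eq_iff (by positivity)]
      ring
    have hid := auxNp_identity A Q (k:ℝ)
    have hmul : w k * ((((A-Q-1)*(A-Q)*(A-Q+1)) * ((k:ℝ)+1) * ((k:ℝ)+2)) * (((k:ℝ)+3)*(A+(k:ℝ)+3)))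
        = (g k - g (k+1)) * ((((A-Q-1)*(A-Q)*(A-Q+1)) * ((k:ℝ)+1) * ((k:ℝ)+2)) * (((k:ℝ)+3)*(A+(k:ℝ)+3))) := by
      linear_combination (-1 : ℝ) * e1 + e2 + auxNp A Q ((k:ℝ)+1) * (hw k)
        + (-(w k * ((k:ℝ)+3))) * hid
    exact mul_right_cancel₀ (by positivity) hmul
  intro N
  have hsum := aux_telescope w g hkey N
  have hg0 : g 0 = 2 * A * (Nat.factorial q : ℝ) / ((A-Q-1)*(A-Q)*(A-Q+1)) := by
    simp only [hgdef, hwdef, Nat.cast_zero]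
    rw [auxFall_zero, hM2]
    have hNp0 : auxNp A Q 0 = 2*A*(A+1)*(A+2) := by unfold auxNp; ring
    rw [hNp0]
    have hA1 : (0:ℝ) < A+1 := by linarith
    have hA2 : (0:ℝ) < A+2 := by linarith
    field_simp
    ring
  calc ∑ k ∈ Finset.range N, auxFall q k * M (k+2) = g 0 - g N := hsum
    _ ≤ g 0 := by linarith [hgnn N]
    _ = 2 * A * (Nat.factorial q : ℝ) / ((A-Q-1)*(A-Q)*(A-Q+1)) := hg0

lemma aux_pow_le (p : ℕ) (hp : 1 ≤ p) (x : ℝ) (hx : 0 ≤ x) :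
    (x+3)^(2*p) ≤ 9/2 * ∏ i ∈ Finset.range (2*p), (x + (i:ℝ) + 1) := by
  induction p, hp using Nat.le_induction with
  | base =>
    rw [show 2*1 = 2 from rfl, Finset.prod_range_succ, Finset.prod_range_succ,
      Finset.prod_range_zero]
    push_cast
    nlinarith
  | succ p hp ih =>
    rw [show 2*(p+1) = 2*p + 2 from by ring, Finset.prod_range_succ, Finset.prod_range_succ,
      pow_add]
    have h2 : (x+3)^2 ≤ (x + (2*p:ℝ) + 1) * (x + (2*p+1:ℝ) + 1) := by
      have hp1 : (1:ℝ) ≤ (p:ℝ) := by exact_mod_cast hp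
      nlinarith
    have hprodnn : 0 ≤ ∏ i ∈ Finset.range (2*p), (x + (i:ℝ) + 1) :=
      Finset.prod_nonneg (fun i _ => by positivity)
    calc (x+3)^(2*p) * (x+3)^2
        ≤ (9/2 * ∏ i ∈ Finset.range (2*p), (x + (i:ℝ) + 1)) *
            ((x + (2*p:ℝ) + 1) * (x + (2*p+1:ℝ) + 1)) := by
          apply mul_le_mul ih h2 (by positivity) (by positivity)
      _ = 9/2 * ((∏ i ∈ Finset.range (2*p), (x + (i:ℝ) + 1)) * (x + ((2*p:ℕ):ℝ) + 1)
            * (x + ((2*p+1:ℕ):ℝ) + 1)) := by push_cast; ring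

set_option maxHeartbeats 1000000 in
/-- For `X` Beta(1, (β/2)n)-distributed with `n ≥ (2/β)(4p+2)`:
`Σ_{k=2}^∞ (k+1)^{2p} E[X^k] ≤ 288 (2p)!/(β² n²)`. (The series is re-indexed by `k ↦ k + 2`.) -/
theorem statement17 (β : ℝ) (hβ : 0 < β) (p : ℕ) (hp : 1 ≤ p) (n : ℝ)
    (hn : (2 / β) * (4 * (p : ℝ) + 2) ≤ n)
    {Ω : Type*} [MeasureSpace Ω] [IsProbabilityMeasure (ℙ : Measure Ω)]
    (X : Ω → ℝ) (hX : Measurable X)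
    (hlaw : Measure.map X ℙ = (volume.restrict (Set.Icc (0 : ℝ) 1)).withDensity
        (fun x => ENNReal.ofReal ((β / 2) * n * (1 - x) ^ ((β / 2) * n - 1)))) :
    ∑' k : ℕ, ((k : ℝ) + 3) ^ (2 * p) * ∫ ω, X ω ^ (k + 2) ∂(ℙ : Measure Ω)
      ≤ 288 * (Nat.factorial (2 * p) : ℝ) / (β ^ 2 * n ^ 2) := by
  have hβ2 : 0 < β / 2 := by linarith
  have hp1 : (1:ℝ) ≤ (p:ℝ) := by exact_mod_cast hp
  set A : ℝ := β / 2 * n with hAdef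
  have hA : 4*(p:ℝ) + 2 ≤ A := by
    have h := mul_le_mul_of_nonneg_left hn hβ2.le
    have he : β / 2 * (2 / β * (4 * (p:ℝ) + 2)) = 4*(p:ℝ)+2 := by
      field_simp
    rw [he] at h
    exact h
  have hA1 : (1:ℝ) ≤ A := by linarith
  have hA0 : (0:ℝ) < A := by linarith
  have hMo : ∀ m : ℕ, ∫ ω, X ω ^ m ∂ℙ = A * ∫ x in (0:ℝ)..1, x ^ m * (1 - x) ^ (A - 1) :=
    aux_moment X hX A hA1 hlaw
  set Ii : ℕ → ℝ := fun r => ∫ x in (0:ℝ)..1, x ^ r * (1 - x) ^ (A - 1) with hIidef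
  have hIm : ∀ m : ℕ, ∫ ω, X ω ^ m ∂ℙ = A * Ii m := hMo
  have hIrec0 := fun r : ℕ => aux_step (s := A) hA1 r
  have hIrec : ∀ r : ℕ, Ii (r+1) = ((r:ℝ)+1)/(A+((r:ℝ)+1)) * Ii r := hIrec0
  have hI0 : Ii 0 = 1/A := by
    simp only [hIidef, pow_zero, one_mul]
    exact aux_base hA0
  have hIpos : ∀ r, 0 < Ii r := by
    intro r
    induction r with
    | zero => rw [hI0]; positivity
    | succ r ih =>
      rw [hIrec r]
      have hd : (0:ℝ) < A + ((r:ℝ)+1) := by positivity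
      have hq : (0:ℝ) < ((r:ℝ)+1)/(A+((r:ℝ)+1)) := by positivity
      exact mul_pos hq ih
  set M : ℕ → ℝ := fun m => A * Ii m with hMdef
  have hMpos : ∀ m, 0 < M m := fun m => mul_pos hA0 (hIpos m)
  have hA1p : (0:ℝ) < A+1 := by linarith
  have hA2p : (0:ℝ) < A+2 := by linarith
  have hM2 : M 2 = 2/((A+1)*(A+2)) := by
    have h1 := hIrec 0
    have h2 := hIrec 1
    norm_num at h1 h2
    simp only [hMdef]
    rw [h2, h1, hI0]
    field_simp
  have hMrec : ∀ k : ℕ, M (k+3) * (A + (k:ℝ) + 3) = ((k:ℝ)+3) * M (k+2) := by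
    intro k
    have h := hIrec (k+2)
    rw [show k+2+1 = k+3 by omega] at h
    push_cast at h
    have hd : (0:ℝ) < A + ((k:ℝ)+2+1) := by positivity
    have h' : Ii (k+3) * (A + ((k:ℝ)+2+1)) = ((k:ℝ)+2+1) * Ii (k+2) := by
      rw [h]; field_simp
    simp only [hMdef]
    linear_combination A * h'
  have hQcast : ((2*p : ℕ):ℝ) = 2*(p:ℝ) := by push_cast; ring
  have hQ2 : (2:ℝ) ≤ ((2*p : ℕ):ℝ) := by rw [hQcast]; linarith
  have hAQ : 2*((2*p : ℕ):ℝ)+2 ≤ A := by rw [hQcast]; linarith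
  apply Real.tsum_le_of_sum_range_le
  · intro k
    rw [hIm (k+2)]
    exact mul_nonneg (by positivity) (mul_pos hA0 (hIpos _)).le
  · intro N
    have hper : ∀ k ∈ Finset.range N,
        ((k:ℝ)+3)^(2*p) * ∫ ω, X ω ^ (k+2) ∂ℙ ≤ 9/2 * (auxFall (2*p) k * M (k+2)) := by
      intro k _
      rw [hIm (k+2)]
      have h1 := aux_pow_le p hp (k:ℝ) (Nat.cast_nonneg k)
      have h2 : (9:ℝ)/2 * ∏ i ∈ Finset.range (2*p), ((k:ℝ) + (i:ℝ) + 1)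
          = 9/2 * auxFall (2*p) k := rfl
      calc ((k:ℝ)+3)^(2*p) * (A * Ii (k+2))
          ≤ (9/2 * auxFall (2*p) k) * (A * Ii (k+2)) := by
            apply mul_le_mul_of_nonneg_right _ (mul_pos hA0 (hIpos _)).le
            rw [← h2]; exact h1
        _ = 9/2 * (auxFall (2*p) k * M (k+2)) := by simp only [hMdef]; ring
    have hcore := aux_core A (2*p) M hQ2 hAQ hMpos hM2 hMrec N
    have hsum := Finset.sum_le_sum hper
    rw [← Finset.mul_sum] at hsum
    have hd1 : (0:ℝ) < A - ((2*p : ℕ):ℝ) - 1 := by rw [hQcast]; linarith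
    have hd2 : (0:ℝ) < A - ((2*p : ℕ):ℝ) := by rw [hQcast]; linarith
    have hd3 : (0:ℝ) < A - ((2*p : ℕ):ℝ) + 1 := by rw [hQcast]; linarith
    have hDpos : (0:ℝ) < (A-((2*p : ℕ):ℝ)-1)*(A-((2*p : ℕ):ℝ))*(A-((2*p : ℕ):ℝ)+1) :=
      mul_pos (mul_pos hd1 hd2) hd3
    have hbn : β^2*n^2 = 4*A^2 := by rw [hAdef]; ring
    have hF : (0:ℝ) ≤ (Nat.factorial (2*p) : ℝ) := Nat.cast_nonneg _
    have hcube : A^3 ≤ 8*((A-((2*p : ℕ):ℝ)-1)*(A-((2*p : ℕ):ℝ))*(A-((2*p : ℕ):ℝ)+1)) := by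
      have t1 : A/2 ≤ A - ((2*p : ℕ):ℝ) - 1 := by rw [hQcast]; linarith
      have t2 : A/2 ≤ A - ((2*p : ℕ):ℝ) := by rw [hQcast]; linarith
      have t3 : A/2 ≤ A - ((2*p : ℕ):ℝ) + 1 := by rw [hQcast]; linarith
      have hA2 : (0:ℝ) ≤ A/2 := by linarith
      have m1 : (A/2)*(A/2) ≤ (A-((2*p : ℕ):ℝ)-1)*(A-((2*p : ℕ):ℝ)) :=
        mul_le_mul t1 t2 hA2 hd1.le
      have m2 : ((A/2)*(A/2))*(A/2) ≤ ((A-((2*p : ℕ):ℝ)-1)*(A-((2*p : ℕ):ℝ)))*(A-((2*p : ℕ):ℝ)+1) :=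
        mul_le_mul m1 t3 hA2 (mul_pos hd1 hd2).le
      nlinarith [m2]
    have hfinal : 9/2 * (2 * A * (Nat.factorial (2*p) : ℝ)
          / ((A-((2*p : ℕ):ℝ)-1)*(A-((2*p : ℕ):ℝ))*(A-((2*p : ℕ):ℝ)+1)))
        ≤ 288 * (Nat.factorial (2*p) : ℝ) / (β^2*n^2) := by
      rw [hbn, ← mul_div_assoc, div_le_div_iff₀ (by positivity) (by positivity)]
      linarith [mul_le_mul_of_nonneg_right hcube hF]
    calc ∑ k ∈ Finset.range N, ((k:ℝ)+3)^(2*p) * ∫ ω, X ω ^ (k+2) ∂ℙ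
        ≤ 9/2 * ∑ k ∈ Finset.range N, auxFall (2*p) k * M (k+2) := hsum
      _ ≤ 9/2 * (2 * A * (Nat.factorial (2*p) : ℝ)
          / ((A-((2*p : ℕ):ℝ)-1)*(A-((2*p : ℕ):ℝ))*(A-((2*p : ℕ):ℝ)+1))) := by
          exact mul_le_mul_of_nonneg_left hcore (by norm_num)
      _ ≤ 288 * (Nat.factorial (2*p) : ℝ) / (β^2*n^2) := hfinal
end

section
/- For every integer p ≥ 1 and every x ∈ [0,1): x² (1 − x)^{−2p−1} ≥ (2/(9 · (2p)!)) · Σ_{k=2}^∞ (k+1)^{2p} x^k, both sides being finite. -/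
private lemma key_asc (p : ℕ) (hp : 1 ≤ p) (k : ℕ) :
    (2 : ℝ) / 9 * ((k : ℝ) + 3) ^ (2 * p) ≤ ((k + 1).ascFactorial (2 * p) : ℝ) := by
  induction p with
  | zero => omega
  | succ p ih =>
    rcases Nat.eq_or_lt_of_le hp with h1 | h1
    · have : 2 * p.succ = 2 := by omega
      rw [this]
      have : (k + 1).ascFactorial 2 = (k + 2) * (k + 1) := by
        simp [Nat.ascFactorial_succ, Nat.ascFactorial]
      rw [this]
      push_cast
      nlinarith [Nat.cast_nonneg (α := ℝ) k]
    · have hp' : 1 ≤ p := by omega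
      have ih' := ih hp'
      have h2 : 2 * (p + 1) = (2 * p + 1) + 1 := by omega
      rw [h2, Nat.ascFactorial_succ, Nat.ascFactorial_succ]
      have hx : (0 : ℝ) ≤ (k : ℝ) + 3 := by positivity
      have hk3 : ((k : ℝ) + 3) ^ (2 * p) ≥ 0 := by positivity
      have e1 : ((k : ℝ) + 3) ≤ ((k + 1 + (2 * p + 1) : ℕ) : ℝ) := by
        push_cast; have : (1 : ℝ) ≤ (p : ℝ) := by exact_mod_cast hp'
        linarith
      have e2 : ((k : ℝ) + 3) ≤ ((k + 1 + 2 * p : ℕ) : ℝ) := by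
        push_cast; have : (1 : ℝ) ≤ (p : ℝ) := by exact_mod_cast hp'
        linarith
      have hasc : (0 : ℝ) ≤ ((k + 1).ascFactorial (2 * p) : ℝ) := Nat.cast_nonneg _
      have step : ((k : ℝ) + 3) * (((k : ℝ) + 3) * ((k + 1).ascFactorial (2 * p) : ℝ)) ≤
          ((k + 1 + (2 * p + 1) : ℕ) : ℝ) * (((k + 1 + 2 * p : ℕ) : ℝ) *
            ((k + 1).ascFactorial (2 * p) : ℝ)) := by
        have := mul_le_mul e2 (le_refl ((k + 1).ascFactorial (2 * p) : ℝ)) hasc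
          (Nat.cast_nonneg _)
        exact mul_le_mul e1 this (by positivity) (Nat.cast_nonneg _)
      push_cast at step ⊢
      calc (2 : ℝ) / 9 * ((k : ℝ) + 3) ^ (2 * (p + 1))
          = ((k : ℝ) + 3) * (((k : ℝ) + 3) * ((2 : ℝ) / 9 * ((k : ℝ) + 3) ^ (2 * p))) := by
            rw [show 2 * (p + 1) = 2 * p + 2 by omega]
            ring
        _ ≤ ((k : ℝ) + 3) * (((k : ℝ) + 3) * ((k + 1).ascFactorial (2 * p) : ℝ)) := by
            apply mul_le_mul_of_nonneg_left _ hx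
            exact mul_le_mul_of_nonneg_left ih' hx
        _ ≤ _ := by push_cast; linarith [step]

/-- For `p ≥ 1` and `x ∈ [0,1)`:
`x² (1-x)^{-2p-1} ≥ (2/(9·(2p)!)) Σ_{k=2}^∞ (k+1)^{2p} x^k`, and the series converges.
(The series is re-indexed by `k ↦ k + 2`.) -/
theorem statement18 (p : ℕ) (hp : 1 ≤ p) (x : ℝ) (hx0 : 0 ≤ x) (hx1 : x < 1) :
    Summable (fun k : ℕ => ((k : ℝ) + 3) ^ (2 * p) * x ^ (k + 2)) ∧
    (2 / (9 * (Nat.factorial (2 * p) : ℝ)))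
        * ∑' k : ℕ, ((k : ℝ) + 3) ^ (2 * p) * x ^ (k + 2)
      ≤ x ^ 2 * (1 - x) ^ (-(2 * (p : ℝ)) - 1) := by
  have hF : (0 : ℝ) < (Nat.factorial (2 * p) : ℝ) := by
    exact_mod_cast Nat.factorial_pos _
  have hnorm : ‖x‖ < 1 := by rwa [Real.norm_eq_abs, abs_of_nonneg hx0]
  have hchoose : HasSum (fun n : ℕ => ((n + 2 * p).choose (2 * p) : ℝ) * x ^ n)
      (1 / (1 - x) ^ (2 * p + 1)) := hasSum_choose_mul_geometric_of_norm_lt_one _ hnorm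
  have hg : HasSum (fun n : ℕ => x ^ 2 * (((n + 2 * p).choose (2 * p) : ℝ) * x ^ n))
      (x ^ 2 * (1 / (1 - x) ^ (2 * p + 1))) := hchoose.mul_left _
  -- termwise bound
  have hterm : ∀ k : ℕ, 2 / (9 * (Nat.factorial (2 * p) : ℝ)) *
      (((k : ℝ) + 3) ^ (2 * p) * x ^ (k + 2)) ≤
      x ^ 2 * (((k + 2 * p).choose (2 * p) : ℝ) * x ^ k) := by
    intro k
    have hkey := key_asc p hp k
    rw [Nat.ascFactorial_eq_factorial_mul_choose] at hkey
    push_cast at hkey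
    have hxk : (0 : ℝ) ≤ x ^ k := pow_nonneg hx0 k
    have h1 : 2 / (9 * (Nat.factorial (2 * p) : ℝ)) * ((k : ℝ) + 3) ^ (2 * p) ≤
        ((k + 2 * p).choose (2 * p) : ℝ) := by
      rw [div_mul_eq_mul_div, div_le_iff₀ (by positivity)]
      push_cast
      nlinarith [hkey]
    calc 2 / (9 * (Nat.factorial (2 * p) : ℝ)) * (((k : ℝ) + 3) ^ (2 * p) * x ^ (k + 2))
        = (2 / (9 * (Nat.factorial (2 * p) : ℝ)) * ((k : ℝ) + 3) ^ (2 * p)) * x ^ (k + 2) := by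
          ring
      _ ≤ ((k + 2 * p).choose (2 * p) : ℝ) * x ^ (k + 2) := by
          exact mul_le_mul_of_nonneg_right h1 (pow_nonneg hx0 _)
      _ = x ^ 2 * (((k + 2 * p).choose (2 * p) : ℝ) * x ^ k) := by
          rw [pow_add]; ring
  have hnn : ∀ k : ℕ, (0 : ℝ) ≤ 2 / (9 * (Nat.factorial (2 * p) : ℝ)) *
      (((k : ℝ) + 3) ^ (2 * p) * x ^ (k + 2)) := by
    intro k; positivity
  have hsum_scaled : Summable (fun k : ℕ => 2 / (9 * (Nat.factorial (2 * p) : ℝ)) *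
      (((k : ℝ) + 3) ^ (2 * p) * x ^ (k + 2))) :=
    Summable.of_nonneg_of_le hnn hterm hg.summable
  have hc : (2 / (9 * (Nat.factorial (2 * p) : ℝ))) ≠ 0 := by positivity
  have hsum : Summable (fun k : ℕ => ((k : ℝ) + 3) ^ (2 * p) * x ^ (k + 2)) :=
    (summable_mul_left_iff hc).mp hsum_scaled
  refine ⟨hsum, ?_⟩
  have hle : ∑' k : ℕ, 2 / (9 * (Nat.factorial (2 * p) : ℝ)) *
      (((k : ℝ) + 3) ^ (2 * p) * x ^ (k + 2)) ≤ x ^ 2 * (1 / (1 - x) ^ (2 * p + 1)) := by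
    rw [← hg.tsum_eq]
    exact Summable.tsum_le_tsum hterm hsum_scaled hg.summable
  rw [tsum_mul_left] at hle
  have hrw : (1 - x) ^ (-(2 * (p : ℝ)) - 1) = ((1 - x) ^ (2 * p + 1))⁻¹ := by
    have h1x : (0 : ℝ) < 1 - x := by linarith
    rw [show -(2 * (p : ℝ)) - 1 = -((2 * p + 1 : ℕ) : ℝ) by push_cast; ring,
      Real.rpow_neg h1x.le, Real.rpow_natCast]
  rw [hrw]
  calc 2 / (9 * (Nat.factorial (2 * p) : ℝ)) * ∑' k : ℕ, ((k : ℝ) + 3) ^ (2 * p) * x ^ (k + 2)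
      ≤ x ^ 2 * (1 / (1 - x) ^ (2 * p + 1)) := hle
    _ = x ^ 2 * ((1 - x) ^ (2 * p + 1))⁻¹ := by rw [one_div]
end
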